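/- arXiv:1607.05420 — 10 statements merged into one kernel-verified Lean document; each statement's English description precedes it below -/
import Mathlib

section
/- Let f_1, ..., f_n be polynomials over a field F of characteristic zero that are linearly independent, let a ∈ F, and let f = f_1 + ... + f_n. Then the multiplicity of a as a root of f is at most n - 1 plus the multiplicity of a as a root of the Wronskian Wr(f_1, ..., f_n) (which is a nonzero polynomial). -/
open Polynomial

/-- The Wronskian determinant of a family of `n` polynomials: the determinant of the
`n × n` matrix whose `(i+1, j)` entry is the `i`-th derivative of `f j`. -/
noncomputable def wronskian {F : Type*} [Field F] {n : ℕ} (f : Fin n → F[X]) : F[X] :=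
  Matrix.det (Matrix.of fun i j : Fin n => derivative^[(i : ℕ)] (f j))

section Aux

variable {F : Type*} [Field F]

private lemma coeff_prod_of_le {ι : Type*} (s : Finset ι) (p : ι → F[X]) (e : ι → ℕ)
    (h : ∀ i ∈ s, (p i).natDegree ≤ e i) :
    (∏ i ∈ s, p i).coeff (∑ i ∈ s, e i) = ∏ i ∈ s, (p i).coeff (e i) := by
  induction s using Finset.cons_induction with
  | empty => simp
  | cons a s ha ih =>
    rw [Finset.prod_cons, Finset.sum_cons,
      Polynomial.coeff_mul_add_eq_of_natDegree_le (h a (Finset.mem_cons_self a s))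
        ((Polynomial.natDegree_prod_le _ _).trans
          (Finset.sum_le_sum fun i hi => h i (Finset.mem_cons_of_mem hi))),
      ih fun i hi => h i (Finset.mem_cons_of_mem hi), Finset.prod_cons]

private lemma iter_deriv_sum {ι : Type*} (s : Finset ι) (p : ι → F[X]) (k : ℕ) :
    derivative^[k] (∑ i ∈ s, p i) = ∑ i ∈ s, derivative^[k] (p i) := by
  induction k with
  | zero => simp
  | succ k ih =>
    rw [Function.iterate_succ_apply', ih, derivative_sum]
    simp [Function.iterate_succ_apply']

private lemma wr_ne_zero_of_strictMono [CharZero F] {n : ℕ} (f : Fin n → F[X])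
    (h0 : ∀ i, f i ≠ 0) (hd : StrictMono fun i : Fin n => (f i).natDegree) :
    wronskian f ≠ 0 := by
  set d : Fin n → ℕ := fun i => (f i).natDegree with hdef
  have hle : ∀ k : ℕ, ∀ i : Fin n, i.val = k → k ≤ d i := by
    intro k
    induction k with
    | zero => exact fun i _ => Nat.zero_le _
    | succ k ih =>
      intro i hi
      have hk : k < n := by omega
      have h1 : k ≤ d ⟨k, hk⟩ := ih _ rfl
      have h2 : d ⟨k, hk⟩ < d i := hd (by simp [Fin.lt_def]; omega)
      omega
  set D : ℕ := ∑ i : Fin n, (d i - (i : ℕ)) with hD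
  set A : Matrix (Fin n) (Fin n) F :=
    Matrix.of fun i j => ((d j).descFactorial (i : ℕ) : F) * (f j).leadingCoeff with hA
  have key : (wronskian f).coeff D = A.det := by
    rw [_root_.wronskian, Matrix.det_apply, Matrix.det_apply, Polynomial.finset_sum_coeff]
    refine Finset.sum_congr rfl fun σ _ => ?_
    rw [Polynomial.coeff_smul]
    congr 1
    by_cases hσ : ∀ i, ((σ i : ℕ)) ≤ d i
    · have hsum : ∑ i : Fin n, (d i - ((σ i : ℕ))) = D := by
        have h1 : ∑ i : Fin n, (d i - ((σ i : ℕ))) = ∑ i : Fin n, d i - ∑ i : Fin n, (σ i : ℕ) :=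
          Finset.sum_tsub_distrib _ fun i _ => hσ i
        have h2 : D = ∑ i : Fin n, d i - ∑ i : Fin n, (i : ℕ) :=
          Finset.sum_tsub_distrib _ fun i _ => hle _ i rfl
        have h3 : ∑ i : Fin n, ((σ i : ℕ)) = ∑ i : Fin n, (i : ℕ) :=
          Equiv.sum_comp σ fun i => (i : ℕ)
        rw [h1, h2, h3]
      simp only [Matrix.of_apply]
      rw [← hsum, coeff_prod_of_le Finset.univ (fun i => derivative^[((σ i : ℕ))] (f i))
        (fun i => d i - ((σ i : ℕ))) (fun i _ => natDegree_iterate_derivative _ _)]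
      refine Finset.prod_congr rfl fun i _ => ?_
      rw [Polynomial.coeff_iterate_derivative,
        Nat.sub_add_cancel (hσ i)]
      rw [hA]
      simp only [Matrix.of_apply, nsmul_eq_mul]
      rfl
    · push_neg at hσ
      obtain ⟨i, hi⟩ := hσ
      have h1 : ∏ x : Fin n, (Matrix.of fun i j : Fin n =>
          derivative^[(i : ℕ)] (f j)) (σ x) x = 0 :=
        Finset.prod_eq_zero (Finset.mem_univ i)
          (by simp [iterate_derivative_eq_zero hi])
      have h2 : ∏ x : Fin n, A (σ x) x = 0 :=
        Finset.prod_eq_zero (Finset.mem_univ i)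
          (by simp [A, Nat.descFactorial_eq_zero_iff_lt.mpr hi])
      rw [h1, h2, Polynomial.coeff_zero]
  have hBt : (Matrix.of fun i j : Fin n => ((d j).descFactorial (i : ℕ) : F)).det ≠ 0 := by
    have h1 : (Matrix.of fun i j : Fin n => ((d j).descFactorial (i : ℕ) : F)) =
        (Matrix.of fun i j : Fin n =>
          (descPochhammer F (j : ℕ)).eval ((d i : ℕ) : F)).transpose := by
      ext i j
      simp [descPochhammer_eval_eq_descFactorial]
    rw [h1, Matrix.det_transpose,
      ← Matrix.det_eval_matrixOfPolynomials_eq_det_vandermonde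
        (fun i : Fin n => ((d i : ℕ) : F)) (fun i : Fin n => descPochhammer F (i : ℕ))
        (fun i => descPochhammer_natDegree F (i : ℕ)) (fun i => monic_descPochhammer F (i : ℕ))]
    refine Matrix.det_vandermonde_ne_zero_iff.mpr ?_
    exact fun x y hxy => hd.injective (Nat.cast_injective hxy)
  have hdetA : A.det ≠ 0 := by
    have hfac : A = (Matrix.of fun i j : Fin n => ((d j).descFactorial (i : ℕ) : F)) *
        Matrix.diagonal (fun j => (f j).leadingCoeff) := by
      ext i j
      simp [A, Matrix.mul_diagonal]
    rw [hfac, Matrix.det_mul, Matrix.det_diagonal]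
    exact mul_ne_zero hBt (Finset.prod_ne_zero_iff.mpr fun i _ =>
      Polynomial.leadingCoeff_ne_zero.mpr (h0 i))
  intro h
  rw [h, Polynomial.coeff_zero] at key
  exact hdetA key.symm

private lemma wr_ne_zero_of_injective [CharZero F] {n : ℕ} (f : Fin n → F[X])
    (h0 : ∀ i, f i ≠ 0) (hinj : Function.Injective fun i => (f i).natDegree) :
    wronskian f ≠ 0 := by
  set σ := Tuple.sort (fun i => (f i).natDegree) with hσ
  have hmono : Monotone ((fun i => (f i).natDegree) ∘ σ) := Tuple.monotone_sort _
  have hsm : StrictMono fun i => ((f ∘ σ) i).natDegree :=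
    hmono.strictMono_of_injective (hinj.comp σ.injective)
  have hne := wr_ne_zero_of_strictMono (f ∘ σ) (fun i => h0 _) hsm
  have hperm : wronskian (f ∘ σ) = (Equiv.Perm.sign σ : ℤ) * wronskian f := by
    have hm : (Matrix.of fun i j : Fin n => derivative^[(i : ℕ)] ((f ∘ σ) j)) =
        (Matrix.of fun i j : Fin n => derivative^[(i : ℕ)] (f j)).submatrix id σ := rfl
    rw [_root_.wronskian, hm, Matrix.det_permute']
    rfl
  intro h
  rw [h, mul_zero] at hperm
  exact hne hperm

private lemma wr_ne_zero [CharZero F] :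
    ∀ (N : ℕ) {n : ℕ} (f : Fin n → F[X]), (∑ i, (f i).natDegree) = N →
      LinearIndependent F f → wronskian f ≠ 0 := by
  intro N
  induction N using Nat.strong_induction_on with
  | _ N ih =>
  intro n f hN hf
  by_cases hinj : Function.Injective fun i => (f i).natDegree
  · exact wr_ne_zero_of_injective f (fun i => hf.ne_zero i) hinj
  · rw [Function.not_injective_iff] at hinj
    obtain ⟨j, k, hdjk, hjk⟩ := hinj
    have hfj : f j ≠ 0 := hf.ne_zero j
    have hfk : f k ≠ 0 := hf.ne_zero k
    set μ : F := (f j).leadingCoeff / (f k).leadingCoeff with hμdef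
    have hμ : μ ≠ 0 := div_ne_zero (Polynomial.leadingCoeff_ne_zero.mpr hfj)
      (Polynomial.leadingCoeff_ne_zero.mpr hfk)
    set g : Fin n → F[X] := Function.update f j (f j - C μ * f k) with hgdef
    have hg : LinearIndependent F g := by
      rw [Fintype.linearIndependent_iff] at hf ⊢
      intro c hc
      set c' : Fin n → F := fun i => if i = k then c k - μ * c j else c i with hc'def
      have key : ∑ i, (c' i • f i - c i • g i) = 0 := by
        rw [← Finset.sum_subset (Finset.subset_univ ({j, k} : Finset (Fin n)))
          (fun x _ hx => ?_)]
        · rw [Finset.sum_pair hjk]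
          simp only [hc'def, hgdef, if_neg hjk, if_pos rfl, Function.update_self,
            Function.update_of_ne (Ne.symm hjk)]
          simp only [Polynomial.smul_eq_C_mul, map_sub, map_mul]
          ring
        · simp only [Finset.mem_insert, Finset.mem_singleton, not_or] at hx
          simp [hc'def, hgdef, if_neg hx.2, Function.update_of_ne hx.1]
      have hsf : ∑ i, c' i • f i = 0 := by
        rw [Finset.sum_sub_distrib, hc, sub_zero] at key
        exact key
      have hall := hf c' hsf
      have hcj : c j = 0 := by
        have := hall j
        simpa [hc'def, if_neg hjk] using this
      intro i
      by_cases hik : i = k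
      · subst hik
        have := hall i
        simpa [hc'def, hcj] using this
      · have := hall i
        simpa [hc'def, if_neg hik] using this
    have hgj : g j = f j - C μ * f k := Function.update_self _ _ _
    have hdeglt : (g j).natDegree < (f j).natDegree := by
      have hgj0 : g j ≠ 0 := hg.ne_zero j
      have hdeq : (f j).degree = (C μ * f k).degree := by
        rw [Polynomial.degree_C_mul hμ, Polynomial.degree_eq_natDegree hfj,
          Polynomial.degree_eq_natDegree hfk, hdjk]
      have hlceq : (f j).leadingCoeff = (C μ * f k).leadingCoeff := by
        rw [Polynomial.leadingCoeff_mul, Polynomial.leadingCoeff_C, hμdef,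
          div_mul_cancel₀ _ (Polynomial.leadingCoeff_ne_zero.mpr hfk)]
      have := Polynomial.degree_sub_lt hdeq hfj hlceq
      rw [← hgj] at this
      exact Polynomial.natDegree_lt_natDegree hgj0 this
    have hw : wronskian g = wronskian f := by
      set M := Matrix.of fun i j' : Fin n => derivative^[(i : ℕ)] (f j') with hM
      have hcol : (Matrix.of fun i j' : Fin n => derivative^[(i : ℕ)] (g j')) =
          M.updateCol j ((fun i => M i j) + (-(C μ : F[X])) • fun i => M i k) := by
        ext i j'
        rcases eq_or_ne j' j with rfl | hne
        · simp [Matrix.updateCol_self, hgdef, Polynomial.iterate_derivative_sub,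
            Polynomial.iterate_derivative_C_mul, hM, sub_eq_add_neg, smul_eq_mul, neg_mul]
        · simp [Matrix.updateCol_ne hne, hgdef, Function.update_of_ne hne, hM]
      rw [_root_.wronskian, _root_.wronskian, hcol, Matrix.det_updateCol_add,
        Matrix.det_updateCol_smul, Matrix.updateCol_eq_self,
        Matrix.det_updateCol_eq_zero (Ne.symm hjk)]
      simp
      rfl
    have hlt : ∑ i, (g i).natDegree < N := by
      rw [← hN]
      refine Finset.sum_lt_sum (fun i _ => ?_) ⟨j, Finset.mem_univ j, hdeglt⟩
      rcases eq_or_ne i j with rfl | h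
      · exact le_of_lt hdeglt
      · simp [hgdef, Function.update_of_ne h]
    have := ih _ hlt g rfl hg
    rwa [hw] at this

end Aux

theorem stmt0 {F : Type*} [Field F] [CharZero F] {n : ℕ} (f : Fin n → F[X])
    (hf : LinearIndependent F f) (a : F) :
    wronskian f ≠ 0 ∧
      (∑ i, f i).rootMultiplicity a ≤ n - 1 + (wronskian f).rootMultiplicity a := by
  have hW : wronskian f ≠ 0 := wr_ne_zero _ f rfl hf
  refine ⟨hW, ?_⟩
  cases n with
  | zero => simp
  | succ m =>
    by_cases hs0 : (∑ i, f i) = 0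
    · simp [hs0]
    set M := Matrix.of fun i j : Fin (m + 1) => derivative^[(i : ℕ)] (f j) with hM
    have hdet : wronskian f =
        (M.updateCol 0 fun k => derivative^[(k : ℕ)] (∑ i, f i)).det := by
      have h1 := Matrix.det_updateCol_sum M 0 (fun _ : Fin (m + 1) => (1 : F[X]))
      rw [one_smul] at h1
      rw [_root_.wronskian, ← hM, ← h1]
      congr 1
      funext k
      simp [iter_deriv_sum, hM]
    set mlt := (∑ i, f i).rootMultiplicity a with hmlt
    have hdvd : (X - C a) ^ (mlt - m) ∣
        (M.updateCol 0 fun k => derivative^[(k : ℕ)] (∑ i, f i)).det := by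
      rw [Matrix.det_succ_column_zero]
      refine Finset.dvd_sum fun i _ => ?_
      have h1 : (X - C a) ^ (mlt - (i : ℕ)) ∣ derivative^[(i : ℕ)] (∑ i, f i) :=
        Polynomial.pow_sub_dvd_iterate_derivative_of_pow_dvd _
          (Polynomial.pow_rootMultiplicity_dvd _ a)
      have h2 : (X - C a) ^ (mlt - m) ∣ (X - C a) ^ (mlt - (i : ℕ)) :=
        pow_dvd_pow _ (Nat.sub_le_sub_left (Nat.lt_succ_iff.mp i.isLt) mlt)
      simp only [Matrix.updateCol_self]
      exact ((h2.trans h1).mul_left _).mul_right _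
    have hle : mlt - m ≤ (wronskian f).rootMultiplicity a := by
      rw [Polynomial.le_rootMultiplicity_iff hW, hdet]
      exact hdvd
    omega
end

section
/- Let f_1, ..., f_n ∈ F[x] be linearly independent polynomials with f_j = Q_j^{d_j} · g_j where d_j ≥ n for all j. Then the polynomial Q = ∏_{j=1}^n Q_j^{d_j - n + 1} divides the Wronskian Wr(f_1, ..., f_n). -/
open Polynomial

private lemma deriv_dvd {F : Type*} [Field F] (Q p : F[X]) (m : ℕ)
    (h : Q ^ m ∣ p) : Q ^ (m - 1) ∣ derivative p := by
  obtain ⟨h, rfl⟩ := h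
  rw [derivative_mul, derivative_pow]
  exact dvd_add (Dvd.dvd.mul_right (Dvd.dvd.mul_right (dvd_mul_left _ _) _) _)
    (Dvd.dvd.mul_right (pow_dvd_pow _ (Nat.sub_le _ _)) _)

private lemma iter_deriv_dvd {F : Type*} [Field F] (Q g : F[X]) (m k : ℕ) :
    Q ^ (m - k) ∣ derivative^[k] (Q ^ m * g) := by
  induction k with
  | zero => exact Dvd.dvd.mul_right dvd_rfl _
  | succ k ih =>
    rw [Function.iterate_succ_apply']
    have := deriv_dvd Q _ (m - k) ih
    rwa [Nat.sub_sub] at this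

theorem stmt1 {F : Type*} [Field F] [CharZero F] {n : ℕ} (f Q g : Fin n → F[X])
    (d : Fin n → ℕ) (hf : LinearIndependent F f)
    (hfact : ∀ j, f j = Q j ^ d j * g j) (hd : ∀ j, n ≤ d j) :
    (∏ j, Q j ^ (d j - n + 1)) ∣ wronskian f := by
  rw [_root_.wronskian, Matrix.det_apply]
  refine Finset.dvd_sum fun σ _ => ?_
  rw [Units.smul_def, zsmul_eq_mul]
  refine Dvd.dvd.mul_left ?_ _
  refine Finset.prod_dvd_prod_of_dvd _ _ fun j _ => ?_
  simp only [Matrix.of_apply, hfact j]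
  refine dvd_trans (pow_dvd_pow _ ?_) (iter_deriv_dvd (Q j) (g j) (d j) (σ j))
  have h1 : (σ j : ℕ) < n := (σ j).isLt
  have h2 := hd j
  omega
end

section
/- Let δ be a nonnegative integer and let f ∈ F[x] be written as f = ∑_{i=1}^t Q_i(x)·(x - a_i)^{e_i} where a_i ∈ F, e_i ∈ ℕ, and deg(Q_i) ≤ δ for all i. Then there exist polynomials P_0, ..., P_{2t-1} ∈ F[x], not all zero, with deg(P_k) ≤ k + δ for each k, such that ∑_{k=0}^{2t-1} P_k(x)·g^{(k)}(x) = 0 holds simultaneously for g = f and for each g = Q_i(x)·(x - a_i)^{e_i}. -/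
open Polynomial

theorem stmt3 {F : Type*} [Field F] [CharZero F] {t : ℕ} (δ : ℕ) (ht : 0 < t)
    (Q : Fin t → F[X]) (a : Fin t → F) (e : Fin t → ℕ)
    (hQ : ∀ i, (Q i).natDegree ≤ δ) (f : F[X])
    (hf : f = ∑ i, Q i * (X - C (a i)) ^ e i) :
    ∃ P : Fin (2 * t) → F[X], P ≠ 0 ∧ (∀ k, (P k).natDegree ≤ (k : ℕ) + δ) ∧
      (∑ k, P k * derivative^[(k : ℕ)] f = 0) ∧
      (∀ i, ∑ k, P k * derivative^[(k : ℕ)] (Q i * (X - C (a i)) ^ e i) = 0) := by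
  classical
  set g : Fin t → F[X] := fun i => Q i * (X - C (a i)) ^ e i with hg
  -- dimensions of degreeLT
  haveI hfd : ∀ n : ℕ, FiniteDimensional F (degreeLT F n) :=
    fun n => Module.Finite.equiv (degreeLTEquiv F n).symm
  have hrank : ∀ n : ℕ, Module.finrank F (degreeLT F n) = n := by
    intro n
    rw [(degreeLTEquiv F n).finrank_eq, Module.finrank_pi, Fintype.card_fin]
  -- the multiplicities
  set m : Fin t → ℕ := fun i => e i - (2 * t - 1) with hm
  -- target submodules
  set S : Fin t → Submodule F F[X] := fun i =>
    (degreeLT F (2 * δ + 2 * t)).map (LinearMap.mulLeft F ((X - C (a i)) ^ m i)) with hS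
  haveI : ∀ i, FiniteDimensional F (S i) := fun i => Module.Finite.map _ _
  -- the value map
  set Ψ : ∀ _ : Fin t, (∀ k : Fin (2 * t), degreeLT F ((k : ℕ) + δ + 1)) →ₗ[F] F[X] :=
    fun i => ∑ k : Fin (2 * t),
      (LinearMap.mulRight F (derivative^[(k : ℕ)] (g i))).comp
        ((Submodule.subtype _).comp (LinearMap.proj k)) with hΨ
  have hΨapp : ∀ i P, Ψ i P = ∑ k : Fin (2 * t), (P k : F[X]) * derivative^[(k : ℕ)] (g i) := by
    intro i P
    simp [hΨ, LinearMap.sum_apply]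
  -- membership of values in S i
  have hmem : ∀ i P, Ψ i P ∈ S i := by
    intro i P
    rw [hΨapp]
    -- divisibility
    have hdvd : (X - C (a i)) ^ m i ∣ ∑ k : Fin (2 * t), (P k : F[X]) * derivative^[(k : ℕ)] (g i) := by
      refine Finset.dvd_sum fun k _ => dvd_mul_of_dvd_right ?_ _
      refine dvd_trans (pow_dvd_pow _ ?_) (pow_sub_dvd_iterate_derivative_of_pow_dvd (k : ℕ)
        (dvd_mul_left _ (Q i)))
      have hmi : m i = e i - (2 * t - 1) := rfl
      have := k.isLt
      omega
    obtain ⟨h, hh⟩ := hdvd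
    -- degree bound of sum
    have hdegterm : ∀ k : Fin (2 * t),
        ((P k : F[X]) * derivative^[(k : ℕ)] (g i)).natDegree < m i + (2 * δ + 2 * t) := by
      intro k
      have h1 : (P k : F[X]).natDegree ≤ (k : ℕ) + δ := by
        rcases eq_or_ne (P k : F[X]) 0 with h0 | h0
        · simp [h0]
        · have := mem_degreeLT.1 (P k).2
          have := (natDegree_lt_iff_degree_lt h0).2 this
          omega
      have h2 : (derivative^[(k : ℕ)] (g i)).natDegree ≤ (δ + e i) - (k : ℕ) := by
        refine (natDegree_iterate_derivative _ _).trans (Nat.sub_le_sub_right ?_ _)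
        calc (g i).natDegree ≤ (Q i).natDegree + ((X - C (a i)) ^ e i).natDegree :=
              natDegree_mul_le
          _ ≤ δ + e i := by
              have hq := hQ i
              have hx : ((X - C (a i)) ^ e i).natDegree ≤ e i := by
                simpa using natDegree_pow_le.trans
                  (Nat.mul_le_mul_left (e i) natDegree_X_sub_C.le)
              omega
      have h3 := natDegree_mul_le (p := (P k : F[X])) (q := derivative^[(k : ℕ)] (g i))
      have hmi : m i = e i - (2 * t - 1) := rfl
      have := k.isLt
      omega
    have hdegsum : (∑ k : Fin (2 * t), (P k : F[X]) * derivative^[(k : ℕ)] (g i)).natDegree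
        < m i + (2 * δ + 2 * t) := by
      refine lt_of_le_of_lt (natDegree_sum_le _ _) ?_
      rw [Finset.fold_max_lt]
      refine ⟨by positivity, fun k _ => hdegterm k⟩
    -- degree bound of quotient
    have hXm : ((X - C (a i)) ^ m i).natDegree = m i := by
      simp [natDegree_pow]
    have hhdeg : h.natDegree < 2 * δ + 2 * t := by
      rcases eq_or_ne h 0 with h0 | h0
      · simp [h0]; omega
      · have hne : (X - C (a i)) ^ m i ≠ 0 := pow_ne_zero _ (X_sub_C_ne_zero _)
        rw [hh, natDegree_mul hne h0, hXm] at hdegsum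
        omega
    refine Submodule.mem_map.2 ⟨h, mem_degreeLT.2 ?_, by simpa using hh.symm⟩
    calc h.degree ≤ (h.natDegree : WithBot ℕ) := degree_le_natDegree
      _ < ((2 * δ + 2 * t : ℕ) : WithBot ℕ) := by exact_mod_cast hhdeg
  -- the full linear map
  set Φ : (∀ k : Fin (2 * t), degreeLT F ((k : ℕ) + δ + 1)) →ₗ[F] ∀ i, S i :=
    LinearMap.pi (fun i => (Ψ i).codRestrict (S i) (hmem i)) with hΦ
  -- finrank comparison
  have hV : Module.finrank F (∀ k : Fin (2 * t), degreeLT F ((k : ℕ) + δ + 1))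
      = ∑ k ∈ Finset.range (2 * t), (k + δ + 1) := by
    rw [Module.finrank_pi_fintype]
    simp only [hrank]
    exact Fin.sum_univ_eq_sum_range (fun k => k + δ + 1) (2 * t)
  have hW : Module.finrank F (∀ i, S i) ≤ t * (2 * δ + 2 * t) := by
    rw [Module.finrank_pi_fintype]
    calc ∑ i, Module.finrank F (S i) ≤ ∑ _i : Fin t, (2 * δ + 2 * t) :=
          Finset.sum_le_sum fun i _ => by
            simpa [hrank] using Submodule.finrank_map_le
              (LinearMap.mulLeft F ((X - C (a i)) ^ m i)) (degreeLT F (2 * δ + 2 * t))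
      _ = t * (2 * δ + 2 * t) := by simp [mul_comm]
  have harith : t * (2 * δ + 2 * t) < ∑ k ∈ Finset.range (2 * t), (k + δ + 1) := by
    have hsum : ∑ k ∈ Finset.range (2 * t), (k + δ + 1)
        = (∑ k ∈ Finset.range (2 * t), k) + 2 * t * (δ + 1) := by
      rw [Finset.sum_add_distrib, Finset.sum_add_distrib, Finset.sum_const, Finset.sum_const]
      simp [Finset.card_range]
      ring
    have hs2 : (∑ k ∈ Finset.range (2 * t), k) * 2 = 2 * t * (2 * t - 1) :=
      Finset.sum_range_id_mul_two (2 * t)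
    have h1 : 2 * t * (2 * t - 1) = 2 * (t * (2 * t - 1)) := by ring
    have e3 : t * (2 * t - 1) + t = t * (2 * t) := by
      have h4 : 2 * t - 1 + 1 = 2 * t := by omega
      calc t * (2 * t - 1) + t = t * (2 * t - 1 + 1) := by ring
        _ = t * (2 * t) := by rw [h4]
    have e1 : t * (2 * δ + 2 * t) = 2 * t * δ + t * (2 * t) := by ring
    have e2 : 2 * t * (δ + 1) = 2 * t * δ + 2 * t := by ring
    omega
  have hker : LinearMap.ker Φ ≠ ⊥ := LinearMap.ker_ne_bot_of_finrank_lt (by omega)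
  obtain ⟨P₀, hP₀mem, hP₀ne⟩ := Submodule.ne_bot_iff _ |>.1 hker
  have hP₀ : ∀ i, ∑ k : Fin (2 * t), (P₀ k : F[X]) * derivative^[(k : ℕ)] (g i) = 0 := by
    intro i
    have := LinearMap.mem_ker.1 hP₀mem
    have h1 : (Φ P₀) i = 0 := by rw [this]; rfl
    have h2 : ((Φ P₀) i : F[X]) = Ψ i P₀ := rfl
    rw [h1] at h2
    rw [← hΨapp i P₀, ← h2]
    rfl
  refine ⟨fun k => (P₀ k : F[X]), ?_, ?_, ?_, ?_⟩
  · intro hEq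
    apply hP₀ne
    funext k
    exact Subtype.ext (congrFun hEq k)
  · intro k
    show ((P₀ k : F[X])).natDegree ≤ (k : ℕ) + δ
    rcases eq_or_ne (P₀ k : F[X]) 0 with h0 | h0
    · simp [h0]
    · have := (natDegree_lt_iff_degree_lt h0).2 (mem_degreeLT.1 (P₀ k).2)
      omega
  · rw [hf]
    calc ∑ k : Fin (2 * t), (P₀ k : F[X]) * derivative^[(k : ℕ)] (∑ i, g i)
        = ∑ k : Fin (2 * t), ∑ i, (P₀ k : F[X]) * derivative^[(k : ℕ)] (g i) := by
          simp_rw [iterate_derivative_sum, Finset.mul_sum]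
      _ = ∑ i, ∑ k : Fin (2 * t), (P₀ k : F[X]) * derivative^[(k : ℕ)] (g i) :=
          Finset.sum_comm
      _ = 0 := by simp [hP₀]
  · exact hP₀
end

section
/- If a polynomial f ∈ F[x] can be written as ∑_{i=1}^s α_i (x - a_i)^{e_i} with α_i, a_i ∈ F and e_i ∈ ℕ, then f satisfies a shifted differential equation of order 2s - 1 and shift 0, i.e., there exist polynomials P_0, ..., P_{2s-1}, not all zero, with deg(P_k) ≤ k, such that ∑_{k=0}^{2s-1} P_k(x) f^{(k)}(x) = 0. -/
open Polynomial

theorem stmt4 {F : Type*} [Field F] [CharZero F] {s : ℕ} (hs : 0 < s)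
    (α a : Fin s → F) (e : Fin s → ℕ) (f : F[X])
    (hf : f = ∑ i, C (α i) * (X - C (a i)) ^ e i) :
    ∃ P : Fin (2 * s) → F[X], P ≠ 0 ∧ (∀ k, (P k).natDegree ≤ (k : ℕ)) ∧
      ∑ k, P k * derivative^[(k : ℕ)] f = 0 := by
  classical
  set V : Submodule F F[X] :=
    Submodule.span F (Set.range fun p : Fin s × Fin (2 * s) =>
      (X - C (a p.1)) ^ (e p.1 - (p.2 : ℕ))) with hV
  have hVfin : Module.Finite F V := Module.Finite.span_of_finite F (Set.finite_range _)
  have hVrank : Module.finrank F V ≤ 2 * s * s := by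
    have h := finrank_range_le_card (R := F) (fun p : Fin s × Fin (2 * s) =>
      (X - C (a p.1)) ^ (e p.1 - (p.2 : ℕ)))
    simp only [Set.finrank, Fintype.card_prod, Fintype.card_fin] at h
    calc Module.finrank F V ≤ s * (2 * s) := h
    _ = 2 * s * s := by ring
  -- membership
  have hmem : ∀ (k : Fin (2 * s)) (j : ℕ), j ≤ (k : ℕ) →
      X ^ j * derivative^[(k : ℕ)] f ∈ V := by
    intro k j hj
    rw [hf, iterate_derivative_sum, Finset.mul_sum]
    refine Submodule.sum_mem _ fun i _ => ?_
    rw [iterate_derivative_C_mul, iterate_derivative_X_sub_pow]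
    rcases lt_or_ge (e i) (k : ℕ) with h | h
    · rw [Nat.descFactorial_eq_zero_iff_lt.mpr h]
      simp
    · -- k ≤ e i
      have hX : (X : F[X]) ^ j = ∑ r ∈ Finset.range (j + 1),
          (X - C (a i)) ^ r * C (a i) ^ (j - r) * (j.choose r : F[X]) := by
        conv_lhs => rw [show (X : F[X]) = (X - C (a i)) + C (a i) by ring]
        rw [add_pow]
      rw [hX, Finset.sum_mul]
      refine Submodule.sum_mem _ fun r hr => ?_
      have hr' : r ≤ j := Nat.lt_succ_iff.mp (Finset.mem_range.mp hr)
      have key : (X - C (a i)) ^ r * C (a i) ^ (j - r) * (j.choose r : F[X]) *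
          (C (α i) * (e i).descFactorial (k : ℕ) • (X - C (a i)) ^ (e i - (k : ℕ))) =
          (α i * (a i) ^ (j - r) * (j.choose r : F) * ((e i).descFactorial (k : ℕ) : F)) •
            (X - C (a i)) ^ (e i - ((k : ℕ) - r)) := by
        have he : e i - ((k : ℕ) - r) = (e i - (k : ℕ)) + r := by omega
        rw [he, pow_add, smul_eq_C_mul, nsmul_eq_mul]
        simp only [C_mul, C_pow, C_eq_natCast]
        ring
      rw [key]
      refine Submodule.smul_mem _ _ (Submodule.subset_span ?_)
      exact ⟨(i, ⟨(k : ℕ) - r, by omega⟩), rfl⟩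
  let ι := Σ k : Fin (2 * s), Fin ((k : ℕ) + 1)
  let v : ι → V := fun p => ⟨X ^ (p.2 : ℕ) * derivative^[(p.1 : ℕ)] f,
    hmem p.1 p.2 (Nat.lt_succ_iff.mp p.2.isLt)⟩
  have hcard : 2 * s * s < Fintype.card ι := by
    rw [Fintype.card_sigma]
    simp only [Fintype.card_fin]
    have h0 : ∑ x : Fin (2 * s), ((x : ℕ) + 1) = ∑ k ∈ Finset.range (2 * s), (k + 1) :=
      Fin.sum_univ_eq_sum_range (fun k => k + 1) _
    rw [h0]
    have h1 : (∑ i ∈ Finset.range (2 * s), i) * 2 = 2 * s * (2 * s - 1) :=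
      Finset.sum_range_id_mul_two _
    have h2 : ∑ k ∈ Finset.range (2 * s), (k + 1) =
        (∑ k ∈ Finset.range (2 * s), k) + 2 * s := by
      rw [Finset.sum_add_distrib, Finset.sum_const, Finset.card_range, smul_eq_mul, mul_one]
    obtain ⟨m, rfl⟩ : ∃ m, s = m + 1 := ⟨s - 1, by omega⟩
    have e1 : 2 * (m + 1) - 1 = 2 * m + 1 := by omega
    rw [e1] at h1
    rw [h2]
    nlinarith [h1]
  have hdep : ¬ LinearIndependent F v := fun h =>
    absurd (h.fintype_card_le_finrank) (by omega)
  obtain ⟨g, hg0, p0, hp0⟩ := Fintype.not_linearIndependent_iff.mp hdep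
  have hsum : ∑ p : ι, g p • (X ^ (p.2 : ℕ) * derivative^[(p.1 : ℕ)] f) = 0 := by
    have := congrArg (Subtype.val) hg0
    simpa [v] using this
  refine ⟨fun k => ∑ j : Fin ((k : ℕ) + 1), C (g ⟨k, j⟩) * X ^ (j : ℕ), ?_, ?_, ?_⟩
  · intro hP
    apply hp0
    have h0 : (∑ j : Fin ((p0.1 : ℕ) + 1), C (g ⟨p0.1, j⟩) * X ^ (j : ℕ)) = 0 :=
      congrFun hP p0.1
    have hc : (∑ j : Fin ((p0.1 : ℕ) + 1), C (g ⟨p0.1, j⟩) * X ^ (j : ℕ)).coeff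
        ((p0.2 : ℕ)) = g ⟨p0.1, p0.2⟩ := by
      rw [finset_sum_coeff, Finset.sum_eq_single p0.2]
      · simp
      · intro b _ hb
        simp [coeff_C_mul, coeff_X_pow, (Fin.val_ne_of_ne hb).symm]
      · simp
    rw [h0, coeff_zero] at hc
    rw [← Sigma.eta p0]
    exact hc.symm
  · intro k
    refine natDegree_sum_le_of_forall_le _ _ fun j _ => ?_
    exact (natDegree_C_mul_X_pow_le _ _).trans (Nat.lt_succ_iff.mp j.isLt)
  · calc ∑ k : Fin (2 * s), (∑ j : Fin ((k : ℕ) + 1), C (g ⟨k, j⟩) * X ^ (j : ℕ)) * derivative^[(k : ℕ)] f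
        = ∑ p : ι, g p • (X ^ (p.2 : ℕ) * derivative^[(p.1 : ℕ)] f) := by
          rw [← Finset.univ_sigma_univ, Finset.sum_sigma]
          refine Finset.sum_congr rfl fun k _ => ?_
          rw [Finset.sum_mul]
          refine Finset.sum_congr rfl fun j _ => ?_
          rw [smul_eq_C_mul, mul_assoc]
      _ = 0 := hsum
end

section
/- The set of polynomial solutions of a shifted differential equation of order k is an F-vector space of dimension at most k. -/
open Polynomial Finset

/-- The linear operator `g ↦ ∑_{i=0}^k P i * g^{(i)}` associated to a shifted
differential equation with coefficients `P`. -/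
noncomputable def sdeOperator {F : Type*} [Field F] {k : ℕ} (P : Fin (k + 1) → F[X]) :
    F[X] →ₗ[F] F[X] :=
  ∑ i, (LinearMap.mulLeft F (P i)) ∘ₗ ((derivative : F[X] →ₗ[F] F[X]) ^ (i : ℕ))

lemma sdeOperator_apply {F : Type*} [Field F] {k : ℕ} (P : Fin (k + 1) → F[X]) (g : F[X]) :
    sdeOperator P g = ∑ i, P i * derivative^[(i : ℕ)] g := by
  simp [sdeOperator, LinearMap.sum_apply, Module.End.pow_apply]

theorem stmt5 {F : Type*} [Field F] [CharZero F] {k : ℕ} (P : Fin (k + 1) → F[X])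
    (hP : P ≠ 0) :
    Module.rank F (LinearMap.ker (sdeOperator P)) ≤ (k : Cardinal) := by
  classical
  obtain ⟨i0, hi0⟩ : ∃ i, P i ≠ 0 := by
    by_contra h; push_neg at h; exact hP (funext h)
  set v : Fin (k + 1) → ℕ := fun i => (P i).natDegree + (k - (i : ℕ)) with hv
  set supp : Finset (Fin (k + 1)) := Finset.univ.filter (fun i => P i ≠ 0) with hsuppdef
  have hsupp : supp.Nonempty := ⟨i0, by simp [hsuppdef, hi0]⟩
  set m := supp.sup v with hm
  set S : Finset (Fin (k + 1)) := supp.filter (fun i => v i = m) with hSdef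
  have hSmem : ∀ i ∈ S, P i ≠ 0 ∧ v i = m := by
    intro i hi
    simp only [hSdef, hsuppdef, Finset.mem_filter, Finset.mem_univ, true_and] at hi
    exact hi
  obtain ⟨i1, hi1supp, hi1⟩ := Finset.exists_mem_eq_sup supp hsupp v
  have hi1S : i1 ∈ S := by
    simp only [hSdef, Finset.mem_filter]
    exact ⟨hi1supp, hi1.symm⟩
  have hS : S.Nonempty := ⟨i1, hi1S⟩
  set Q : F[X] := ∑ i ∈ S, C (P i).leadingCoeff * descPochhammer F (i : ℕ) with hQdef
  -- each term's natDegree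
  have hterm_deg : ∀ i ∈ S, (C (P i).leadingCoeff * descPochhammer F (i : ℕ)).natDegree = i := by
    intro i hi
    rw [natDegree_C_mul (leadingCoeff_ne_zero.mpr (hSmem i hi).1), descPochhammer_natDegree]
  -- Q ≠ 0
  set imax := S.max' hS with himax
  have himaxS : imax ∈ S := S.max'_mem hS
  have hQcoeff : Q.coeff (imax : ℕ) = (P imax).leadingCoeff := by
    rw [hQdef, finset_sum_coeff]
    rw [Finset.sum_eq_single imax]
    · rw [coeff_C_mul]
      have : (descPochhammer F (imax : ℕ)).coeff (imax : ℕ) = 1 := by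
        have hmonic := monic_descPochhammer F (imax : ℕ)
        have := hmonic.leadingCoeff
        rwa [leadingCoeff, descPochhammer_natDegree] at this
      rw [this, mul_one]
    · intro i hi hne
      apply coeff_eq_zero_of_natDegree_lt
      rw [hterm_deg i hi]
      exact_mod_cast lt_of_le_of_ne (S.le_max' i hi) (by exact_mod_cast hne)
    · intro h; exact absurd himaxS h
  have hQ0 : Q ≠ 0 := fun h => by
    rw [h, coeff_zero] at hQcoeff
    exact leadingCoeff_ne_zero.mpr (hSmem imax himaxS).1 hQcoeff.symm
  have hQdeg : Q.natDegree ≤ k := by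
    apply natDegree_sum_le_of_forall_le
    intro i hi
    rw [hterm_deg i hi]
    exact Nat.lt_succ_iff.mp i.isLt
  -- evaluation of Q at naturals
  have hQeval : ∀ n : ℕ, Q.eval (n : F) =
      ∑ i ∈ S, (P i).leadingCoeff * (n.descFactorial (i : ℕ) : F) := by
    intro n
    rw [hQdef, eval_finset_sum]
    refine Finset.sum_congr rfl fun i hi => ?_
    rw [eval_mul, eval_C, descPochhammer_eval_eq_descFactorial]
  -- key lemma
  have key : ∀ g, g ∈ LinearMap.ker (sdeOperator P) → g ≠ 0 →
      Q.eval ((g.natDegree : F)) = 0 := by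
    intro g hg hg0
    set n := g.natDegree with hn
    by_cases hcase : n + m < k
    · -- all i in S have i > n
      rw [hQeval]
      apply Finset.sum_eq_zero
      intro i hi
      obtain ⟨hPi, hvi⟩ := hSmem i hi
      have hik : (i : ℕ) ≤ k := Nat.lt_succ_iff.mp i.isLt
      have : n < (i : ℕ) := by
        have := hvi
        simp only [hv] at this
        omega
      rw [Nat.descFactorial_eq_zero_iff_lt.mpr this, Nat.cast_zero, mul_zero]
    · push_neg at hcase
      set t := n + m - k with ht
      have hLg : (sdeOperator P) g = 0 := hg
      have hcoeff : ((sdeOperator P) g).coeff t = Q.eval ((n : F)) * g.leadingCoeff := by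
        rw [sdeOperator_apply, finset_sum_coeff, hQeval, Finset.sum_mul]
        rw [← Finset.sum_subset (Finset.subset_univ S)]
        · refine Finset.sum_congr rfl fun i hi => ?_
          obtain ⟨hPi, hvi⟩ := hSmem i hi
          have hik : (i : ℕ) ≤ k := Nat.lt_succ_iff.mp i.isLt
          have hvi' : (P i).natDegree + (k - (i : ℕ)) = m := hvi
          by_cases hin : n < (i : ℕ)
          · rw [iterate_derivative_eq_zero hin, mul_zero, coeff_zero,
              Nat.descFactorial_eq_zero_iff_lt.mpr hin, Nat.cast_zero, mul_zero, zero_mul]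
          · push_neg at hin
            set h := derivative^[(i : ℕ)] g with hh
            have hcoeffh : h.coeff (n - (i : ℕ)) = (n.descFactorial (i : ℕ) : F) * g.leadingCoeff := by
              rw [hh, coeff_iterate_derivative, Nat.sub_add_cancel hin, nsmul_eq_mul]
              rfl
            have hne : h.coeff (n - (i : ℕ)) ≠ 0 := by
              rw [hcoeffh]
              apply mul_ne_zero
              · have : n.descFactorial (i : ℕ) ≠ 0 := by
                  rw [Ne, Nat.descFactorial_eq_zero_iff_lt]; omega
                exact_mod_cast this
              · exact leadingCoeff_ne_zero.mpr hg0
            have hdegh : h.natDegree = n - (i : ℕ) :=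
              le_antisymm (natDegree_iterate_derivative g _) (le_natDegree_of_ne_zero hne)
            have htt : t = (P i).natDegree + h.natDegree := by
              rw [hdegh]; omega
            have hlc : h.leadingCoeff = (n.descFactorial (i : ℕ) : F) * g.leadingCoeff := by
              rw [Polynomial.leadingCoeff, hdegh, hcoeffh]
            rw [htt, coeff_mul_degree_add_degree, hlc, ← mul_assoc]
        · intro i _ hiS
          by_cases hPi : P i = 0
          · rw [hPi, zero_mul, coeff_zero]
          · have hik : (i : ℕ) ≤ k := Nat.lt_succ_iff.mp i.isLt
            have hisupp : i ∈ supp := by simp [hsuppdef, hPi]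
            have hvm : v i < m := lt_of_le_of_ne (Finset.le_sup hisupp)
              (fun h => hiS (by simp [hSdef, hisupp, h]))
            simp only [hv] at hvm
            by_cases hin : n < (i : ℕ)
            · rw [iterate_derivative_eq_zero hin, mul_zero, coeff_zero]
            · push_neg at hin
              apply coeff_eq_zero_of_natDegree_lt
              apply lt_of_le_of_lt (natDegree_mul_le)
              have := natDegree_iterate_derivative g (i : ℕ)
              omega
      rw [hLg, coeff_zero] at hcoeff
      rcases mul_eq_zero.mp hcoeff.symm with h | h
      · exact h
      · exact absurd h (leadingCoeff_ne_zero.mpr hg0)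
  -- the finite set of possible degrees
  set NS : Finset ℕ := Q.roots.toFinset.preimage (Nat.cast : ℕ → F)
    (Nat.cast_injective.injOn) with hNS
  have hNScard : NS.card ≤ k := by
    have h1 : (NS.image (Nat.cast : ℕ → F)).card = NS.card :=
      Finset.card_image_of_injective _ Nat.cast_injective
    have h2 : NS.image (Nat.cast : ℕ → F) ⊆ Q.roots.toFinset := by
      intro x hx
      obtain ⟨n, hn, rfl⟩ := Finset.mem_image.mp hx
      exact Finset.mem_preimage.mp hn
    calc NS.card = (NS.image (Nat.cast : ℕ → F)).card := h1.symm
      _ ≤ Q.roots.toFinset.card := Finset.card_le_card h2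
      _ ≤ Multiset.card Q.roots := Q.roots.toFinset_card_le
      _ ≤ Q.natDegree := Q.card_roots'
      _ ≤ k := hQdeg
  -- injective linear map
  let φ : F[X] →ₗ[F] (↥NS → F) := LinearMap.pi (fun d => lcoeff F (d : ℕ))
  have hinj : Function.Injective (φ ∘ₗ (LinearMap.ker (sdeOperator P)).subtype) := by
    rw [← LinearMap.ker_eq_bot, LinearMap.ker_eq_bot']
    intro g hgφ
    by_contra hg0
    have hgmem := g.2
    have hgne : (g : F[X]) ≠ 0 := fun h => hg0 (Subtype.ext h)
    have hQn := key g hgmem hgne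
    have hroot : ((g : F[X]).natDegree : F) ∈ Q.roots.toFinset := by
      rw [Multiset.mem_toFinset, mem_roots hQ0]
      exact hQn
    have hmem : (g : F[X]).natDegree ∈ NS := Finset.mem_preimage.mpr hroot
    have := congrFun (congrArg (fun f => f) hgφ) ⟨(g : F[X]).natDegree, hmem⟩
    simp only [LinearMap.comp_apply, Submodule.subtype_apply, LinearMap.pi_apply,
      lcoeff_apply, Pi.zero_apply, φ] at this
    exact leadingCoeff_ne_zero.mpr hgne this
  calc Module.rank F (LinearMap.ker (sdeOperator P))
      ≤ Module.rank F (↥NS → F) := LinearMap.rank_le_of_injective _ hinj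
    _ = Fintype.card ↥NS := rank_fun'
    _ = (NS.card : Cardinal) := by rw [Fintype.card_coe]
    _ ≤ (k : Cardinal) := by exact_mod_cast hNScard
end

section
/- Suppose ∑_{i=1}^k α_i (x - a_i)^d = ∑_{i=1}^l β_i (x - b_i)^{e_i} in F[x], where the a_i ∈ F are distinct, the α_i are not all zero, β_i, b_i ∈ F are arbitrary, and e_i < d for every i. Then k + l > √(2(d+1)). -/
open Polynomial Matrix Finset

set_option linter.unusedSectionVars false
set_option maxHeartbeats 1000000

namespace Stmt8Aux

variable {F : Type*} [Field F] [CharZero F]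

lemma iterDeriv_pow (u : F) (v j : ℕ) :
    derivative^[j] ((X - C u) ^ v) =
      C ((v.descFactorial j : F)) * (X - C u) ^ (v - j) := by
  induction j with
  | zero => simp
  | succ j ih =>
    rw [Function.iterate_succ_apply', ih, derivative_C_mul, derivative_pow,
      derivative_X_sub_C, mul_one, Nat.descFactorial_succ,
      show v - (j+1) = v - j - 1 from by omega, Nat.cast_mul, C_mul]
    ring

lemma iterDeriv_sum {ι : Type*} (s : Finset ι) (g : ι → F[X]) (j : ℕ) :
    derivative^[j] (∑ i ∈ s, g i) = ∑ i ∈ s, derivative^[j] (g i) := by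
  induction j with
  | zero => simp
  | succ j ih =>
    rw [Function.iterate_succ_apply', ih, derivative_sum]
    simp [Function.iterate_succ_apply']

lemma iterDeriv_C_mul (c : F) (p : F[X]) (j : ℕ) :
    derivative^[j] (C c * p) = C c * derivative^[j] p := by
  induction j with
  | zero => simp
  | succ j ih => rw [Function.iterate_succ_apply', ih, derivative_C_mul,
      Function.iterate_succ_apply']

noncomputable def emat {q : ℕ} (U : Fin q → F) (V : Fin q → ℕ) :
    Matrix (Fin q) (Fin q) F[X] :=
  Matrix.of fun i j => C (((V i).descFactorial (j : ℕ) : F)) * (X - C (U i)) ^ (V i - (j : ℕ))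

noncomputable def dmat {q : ℕ} (P : Fin q → F[X]) : Matrix (Fin q) (Fin q) F[X] :=
  Matrix.of fun i j => derivative^[(j : ℕ)] (P i)

lemma dmat_eq_emat {q : ℕ} (U : Fin q → F) (V : Fin q → ℕ) :
    dmat (fun i => (X - C (U i)) ^ (V i)) = emat U V := by
  funext i j
  simp only [dmat, emat, Matrix.of_apply, iterDeriv_pow]

lemma sum_tsub_card {ι : Type*} [DecidableEq ι] (s : Finset ι) (f : ι → ℕ) (w : ℕ) :
    (∑ i ∈ s, f i) - s.card * w ≤ ∑ i ∈ s, (f i - w) := by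
  induction s using Finset.induction_on with
  | empty => simp
  | @insert a s h ih =>
    rw [Finset.sum_insert h, Finset.sum_insert h, Finset.card_insert_of_notMem h]
    have hh : (s.card + 1) * w = s.card * w + w := by ring
    omega


lemma emat_entry_zero {q : ℕ} (U : Fin q → F) (V : Fin q → ℕ) {i j : Fin q}
    (h : V i < (j : ℕ)) : emat U V i j = 0 := by
  simp [emat, Nat.descFactorial_eq_zero_iff_lt.mpr h]

lemma emat_det_deg {q : ℕ} (U : Fin q → F) (V : Fin q → ℕ)
    (h : (emat U V).det ≠ 0) :
    (emat U V).det.natDegree + (∑ i : Fin q, (i : ℕ)) ≤ ∑ i, V i := by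
  classical
  -- there is a nonzero term
  have hterm : ∃ σ : Equiv.Perm (Fin q),
      (Equiv.Perm.sign σ • ∏ i, emat U V (σ i) i) ≠ 0 := by
    by_contra hall
    push_neg at hall
    exact h (by rw [Matrix.det_apply]; exact Finset.sum_eq_zero fun σ _ => hall σ)
  obtain ⟨σ, hσ⟩ := hterm
  have hle : ∀ i : Fin q, (i : ℕ) ≤ V (σ i) := by
    intro i
    by_contra hlt
    have h0 : (∏ i, emat U V (σ i) i) = 0 :=
      Finset.prod_eq_zero (Finset.mem_univ i) (emat_entry_zero U V (by omega))
    exact hσ (by rw [h0, smul_zero])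
  have hBW : (∑ i : Fin q, (i : ℕ)) ≤ ∑ i, V i := by
    calc (∑ i : Fin q, (i : ℕ)) ≤ ∑ i, V (σ i) := Finset.sum_le_sum fun i _ => hle i
      _ = ∑ i, V i := Equiv.sum_comp σ V
  -- degree bound
  have hdeg : (emat U V).det.degree ≤
      (((∑ i, V i) - ∑ i : Fin q, (i : ℕ) : ℕ) : WithBot ℕ) := by
    rw [Matrix.det_apply]
    refine le_trans (Polynomial.degree_sum_le _ _) (Finset.sup_le ?_)
    intro τ _
    by_cases hz : (∏ i, emat U V (τ i) i) = 0
    · simp [hz]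
    · have hle' : ∀ i : Fin q, (i : ℕ) ≤ V (τ i) := by
        intro i
        by_contra hlt
        exact hz (Finset.prod_eq_zero (Finset.mem_univ i) (emat_entry_zero U V (by omega)))
      have hsgn : (Equiv.Perm.sign τ • ∏ i, emat U V (τ i) i).degree
          = (∏ i, emat U V (τ i) i).degree := by
        rcases Int.units_eq_one_or (Equiv.Perm.sign τ) with hs | hs <;> simp [hs]
      rw [hsgn]
      refine le_trans (Polynomial.degree_prod_le _ _) ?_
      have hent : ∀ i : Fin q, (emat U V (τ i) i).degree
          ≤ ((V (τ i) - (i : ℕ) : ℕ) : WithBot ℕ) := by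
        intro i
        refine le_trans (Polynomial.degree_mul_le _ _) ?_
        have h1 : (C (((V (τ i)).descFactorial (i : ℕ) : F))).degree ≤ 0 :=
          Polynomial.degree_C_le
        have h2 : ((X - C (U (τ i))) ^ (V (τ i) - (i : ℕ))).degree
            = ((V (τ i) - (i : ℕ) : ℕ) : WithBot ℕ) := by
          rw [Polynomial.degree_pow, Polynomial.degree_X_sub_C]
          simp
        calc (C (((V (τ i)).descFactorial (i : ℕ) : F))).degree
              + ((X - C (U (τ i))) ^ (V (τ i) - (i : ℕ))).degree
            ≤ 0 + ((V (τ i) - (i : ℕ) : ℕ) : WithBot ℕ) :=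
              add_le_add h1 (le_of_eq h2)
          _ = _ := zero_add _
      refine le_trans (Finset.sum_le_sum fun i _ => hent i) ?_
      have hsum : ∑ i : Fin q, (((V (τ i) - (i : ℕ) : ℕ)) : WithBot ℕ)
          = (((∑ i : Fin q, (V (τ i) - (i : ℕ))) : ℕ) : WithBot ℕ) := by
        rw [Nat.cast_sum]
      rw [hsum]
      have : (∑ i : Fin q, (V (τ i) - (i : ℕ))) = (∑ i, V i) - ∑ i : Fin q, (i : ℕ) := by
        have h1 : (∑ i : Fin q, (V (τ i) - (i : ℕ))) + ∑ i : Fin q, (i : ℕ)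
            = ∑ i, V i := by
          rw [← Finset.sum_add_distrib, ← Equiv.sum_comp τ V]
          exact Finset.sum_congr rfl fun i _ => by have := hle' i; omega
        omega
      rw [this]
  have := Polynomial.natDegree_le_iff_degree_le.mpr hdeg
  omega


lemma emat_det_dvd {q : ℕ} [DecidableEq F] (U : Fin q → F) (V : Fin q → ℕ) (u : F) :
    (X - C u) ^ ((∑ i ∈ Finset.univ.filter (fun i => U i = u), V i)
        - (Finset.univ.filter (fun i => U i = u)).card * (q - 1)) ∣ (emat U V).det := by
  classical
  rw [Matrix.det_apply]
  apply Finset.dvd_sum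
  intro σ _
  have core : (X - C u) ^ ((∑ i ∈ Finset.univ.filter (fun i => U i = u), V i)
      - (Finset.univ.filter (fun i => U i = u)).card * (q - 1))
      ∣ ∏ i, emat U V (σ i) i := by
    have hre : ∏ i, emat U V (σ i) i = ∏ r, emat U V r (σ.symm r) := by
      rw [← Equiv.prod_comp σ (fun r => emat U V r (σ.symm r))]
      exact Finset.prod_congr rfl fun i _ => by rw [Equiv.symm_apply_apply]
    rw [hre, ← Finset.prod_filter_mul_prod_filter_not Finset.univ (fun r => U r = u)]
    apply dvd_mul_of_dvd_left
    have hfac : ∀ r ∈ Finset.univ.filter (fun r => U r = u),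
        (X - C u) ^ (V r - (q - 1)) ∣ emat U V r (σ.symm r) := by
      intro r hr
      have hru : U r = u := (Finset.mem_filter.mp hr).2
      have hpow : (X - C u) ^ (V r - (q - 1)) ∣ (X - C u) ^ (V r - ((σ.symm r : ℕ))) := by
        apply pow_dvd_pow
        have : ((σ.symm r : ℕ)) ≤ q - 1 := by
          have := (σ.symm r).isLt; omega
        omega
      simpa [emat, hru] using hpow.mul_left _
    calc (X - C u) ^ ((∑ i ∈ Finset.univ.filter (fun i => U i = u), V i)
          - (Finset.univ.filter (fun i => U i = u)).card * (q - 1))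
        ∣ ∏ r ∈ Finset.univ.filter (fun r => U r = u), (X - C u) ^ (V r - (q - 1)) := by
          rw [Finset.prod_pow_eq_pow_sum]
          exact pow_dvd_pow _ (sum_tsub_card _ _ _)
      _ ∣ ∏ r ∈ Finset.univ.filter (fun r => U r = u), emat U V r (σ.symm r) :=
          Finset.prod_dvd_prod_of_dvd _ _ hfac
  rcases Int.units_eq_one_or (Equiv.Perm.sign σ) with hs | hs
  · rw [hs, one_smul]; exact core
  · rw [hs]
    simpa using core.neg_right


lemma main_ineq {q : ℕ} [DecidableEq F] (U : Fin q → F) (V : Fin q → ℕ) (A : F) (D : ℕ)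
    (hD : 0 < D)
    (hne : ∀ i, (U i, V i) ≠ (A, D))
    (hdet : (emat U V).det ≠ 0)
    (c : Fin q → F)
    (hc : (X - C A) ^ D = ∑ i, C (c i) * (X - C (U i)) ^ (V i)) :
    2 * D + q * (q - 1) ≤ 2 * (q * q) - 2 := by
  classical
  have hq1 : 1 ≤ q := by
    by_contra hq
    have hq0 : q = 0 := by omega
    subst hq0
    have h0 : (X - C A) ^ D = 0 := by rw [hc]; simp
    exact pow_ne_zero D (X_sub_C_ne_zero A) h0
  -- existence of j0 with c j0 ≠ 0 and U j0 ≠ A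
  have hj0 : ∃ j0 : Fin q, c j0 ≠ 0 ∧ U j0 ≠ A := by
    by_contra hcon
    push_neg at hcon
    have hL : ((derivative^[D] ((X - C A) ^ D)).eval A) = (D.factorial : F) := by
      rw [iterDeriv_pow]
      simp [Nat.descFactorial_self]
    have hR : ((derivative^[D] (∑ i, C (c i) * (X - C (U i)) ^ (V i))).eval A) = 0 := by
      rw [iterDeriv_sum, Polynomial.eval_finset_sum]
      apply Finset.sum_eq_zero
      intro i _
      rw [iterDeriv_C_mul, iterDeriv_pow]
      by_cases hci : c i = 0
      · simp [hci]
      · have hUi : U i = A := hcon i hci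
        have hViD : V i ≠ D := fun h => hne i (by rw [hUi, h])
        by_cases hlt : V i < D
        · simp [Nat.descFactorial_eq_zero_iff_lt.mpr hlt]
        · have hpos : V i - D ≠ 0 := by omega
          rw [hUi]
          simp [sub_self, zero_pow hpos]
    have hEq := congrArg (fun p : F[X] => (derivative^[D] p).eval A) hc
    rw [hL, hR] at hEq
    exact Nat.cast_ne_zero.mpr (Nat.factorial_ne_zero D) hEq
  obtain ⟨j0, hcj0, hUj0⟩ := hj0
  -- swapped matrix
  have hrow : (fun j : Fin q => C ((D.descFactorial (j : ℕ) : F)) * (X - C A) ^ (D - (j : ℕ)))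
      = ∑ i, C (c i) • emat U V i := by
    funext j
    have h1 := congrArg (fun p : F[X] => derivative^[(j : ℕ)] p) hc
    rw [iterDeriv_pow, iterDeriv_sum] at h1
    simp only [iterDeriv_C_mul, iterDeriv_pow] at h1
    rw [h1, Finset.sum_apply]
    apply Finset.sum_congr rfl
    intro i _
    simp [emat, smul_eq_C_mul, mul_assoc]
  have hdetN : ((emat U V).updateRow j0
      (fun j : Fin q => C ((D.descFactorial (j : ℕ) : F)) * (X - C A) ^ (D - (j : ℕ)))).det
      = C (c j0) * (emat U V).det := by
    rw [hrow, Matrix.det_updateRow_sum, smul_eq_mul]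
  have hNe : (emat U V).updateRow j0
      (fun j : Fin q => C ((D.descFactorial (j : ℕ) : F)) * (X - C A) ^ (D - (j : ℕ)))
      = emat (Function.update U j0 A) (Function.update V j0 D) := by
    funext i j
    rw [Matrix.updateRow_apply]
    by_cases hij : i = j0
    · subst hij; simp [emat, Function.update_self]
    · simp [hij, emat, Function.update_of_ne hij]
  -- exponent bookkeeping
  set T : F → ℕ := fun u => ∑ i ∈ Finset.univ.filter (fun i => U i = u), V i with hT
  set sc : F → ℕ := fun u => (Finset.univ.filter (fun i => U i = u)).card with hsc
  set ee : F → ℕ := fun u => if u = A then (T u + D) - (sc u + 1) * (q - 1)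
    else T u - sc u * (q - 1) with hee
  set shifts : Finset F := insert A (Finset.univ.image U) with hshifts
  have hfil : Finset.univ.filter (fun i => Function.update U j0 A i = A)
      = insert j0 (Finset.univ.filter (fun i => U i = A)) := by
    ext i
    by_cases hij : i = j0
    · subst hij; simp [Function.update_self]
    · simp [Function.update_of_ne hij, hij]
  have hj0nf : j0 ∉ Finset.univ.filter (fun i => U i = A) := by simp [hUj0]
  have hdvd : ∀ u ∈ shifts, (X - C u) ^ ee u ∣ (emat U V).det := by
    intro u hu
    by_cases hA : u = A
    · subst hA
      have h1 := emat_det_dvd (Function.update U j0 u) (Function.update V j0 D) u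
      have hsum : ∑ i ∈ Finset.univ.filter (fun i => Function.update U j0 u i = u),
          Function.update V j0 D i = T u + D := by
        rw [hfil, Finset.sum_insert hj0nf, Function.update_self]
        have hcg : ∀ i ∈ Finset.univ.filter (fun i => U i = u), Function.update V j0 D i = V i := by
          intro i hi
          have hiu : U i = u := (Finset.mem_filter.mp hi).2
          have hij : i ≠ j0 := fun h => hUj0 (by rw [← h, hiu])
          exact Function.update_of_ne hij _ _
        rw [Finset.sum_congr rfl hcg]
        show D + ∑ i ∈ Finset.univ.filter (fun i => U i = u), V i
          = (∑ i ∈ Finset.univ.filter (fun i => U i = u), V i) + D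
        exact add_comm _ _
      have hcard : (Finset.univ.filter (fun i => Function.update U j0 u i = u)).card
          = sc u + 1 := by
        rw [hfil, Finset.card_insert_of_notMem hj0nf, hsc]
      rw [hsum, hcard] at h1
      rw [← hNe, hdetN] at h1
      have heeu : ee u = (T u + D) - (sc u + 1) * (q - 1) := by rw [hee]; simp
      rw [heeu]
      obtain ⟨uinv, huinv⟩ := (isUnit_C.mpr (isUnit_iff_ne_zero.mpr hcj0)).exists_left_inv
      have h2 : (X - C u) ^ ((T u + D) - (sc u + 1) * (q - 1)) ∣
          uinv * (C (c j0) * (emat U V).det) := h1.mul_left uinv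
      rwa [← mul_assoc, huinv, one_mul] at h2
    · have h1 := emat_det_dvd U V u
      have heeu : ee u = T u - sc u * (q - 1) := by rw [hee]; simp [hA]
      rw [heeu]
      exact h1
  have hprod : (∏ u ∈ shifts, (X - C u) ^ ee u) ∣ (emat U V).det := by
    apply Finset.prod_dvd_of_coprime
    · intro u hu v hv huv
      exact ((Polynomial.pairwise_coprime_X_sub_C (Function.injective_id (α := F))) huv).pow
    · intro u hu; exact hdvd u hu
  have hndeg : ∑ u ∈ shifts, ee u ≤ (emat U V).det.natDegree := by
    have h1 := Polynomial.natDegree_le_of_dvd hprod hdet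
    rw [Polynomial.natDegree_prod] at h1
    · have h2 : ∑ u ∈ shifts, ((X - C u) ^ ee u).natDegree = ∑ u ∈ shifts, ee u :=
        Finset.sum_congr rfl fun u _ => by
          rw [(monic_X_sub_C u).natDegree_pow, Polynomial.natDegree_X_sub_C, mul_one]
      omega
    · intro u _; exact pow_ne_zero _ (X_sub_C_ne_zero u)
  have hTsum : ∑ u ∈ shifts, T u = ∑ i, V i := by
    by_cases hAin : A ∈ Finset.univ.image U
    · rw [hshifts, Finset.insert_eq_self.mpr hAin]
      exact Finset.sum_fiberwise_of_maps_to
        (fun i _ => Finset.mem_image_of_mem U (Finset.mem_univ i)) V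
    · rw [hshifts, Finset.sum_insert hAin]
      have hTA : T A = 0 := by
        show (∑ i ∈ Finset.univ.filter (fun i => U i = A), V i) = 0
        have hempty : Finset.univ.filter (fun i => U i = A) = ∅ := by
          ext i
          simp only [Finset.mem_filter, Finset.mem_univ, true_and, Finset.notMem_empty,
            iff_false]
          intro h
          exact hAin (by rw [← h]; exact Finset.mem_image_of_mem U (Finset.mem_univ i))
        rw [hempty, Finset.sum_empty]
      rw [hTA, zero_add]
      exact Finset.sum_fiberwise_of_maps_to
        (fun i _ => Finset.mem_image_of_mem U (Finset.mem_univ i)) V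
  have hscsum : ∑ u ∈ shifts, sc u = q := by
    have hgen : ∑ u ∈ Finset.univ.image U, sc u = q := by
      have := Finset.sum_fiberwise_of_maps_to
        (fun i (_ : i ∈ Finset.univ) => Finset.mem_image_of_mem U (Finset.mem_univ i))
        (fun _ : Fin q => (1 : ℕ))
      simp only [Finset.sum_const, smul_eq_mul, mul_one] at this
      rw [hsc] at *
      simpa using this
    by_cases hAin : A ∈ Finset.univ.image U
    · rw [hshifts, Finset.insert_eq_self.mpr hAin]; exact hgen
    · rw [hshifts, Finset.sum_insert hAin]
      have hscA : sc A = 0 := by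
        show (Finset.univ.filter (fun i => U i = A)).card = 0
        simp only [Finset.card_eq_zero]
        ext i
        simp only [Finset.mem_filter, Finset.mem_univ, true_and, Finset.notMem_empty, iff_false]
        intro h
        exact hAin (by rw [← h]; exact Finset.mem_image_of_mem U (Finset.mem_univ i))
      rw [hscA, zero_add]; exact hgen
  have hper : ∀ u ∈ shifts, T u + (if u = A then D else 0)
      ≤ ee u + sc u * (q - 1) + (if u = A then q - 1 else 0) := by
    intro u _
    by_cases hA : u = A
    · subst hA
      simp only [hee, if_pos rfl, eq_self_iff_true, if_true]
      have hmm : (sc u + 1) * (q - 1) = sc u * (q - 1) + (q - 1) := by ring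
      generalize hZ1 : sc u * (q - 1) = Z1 at hmm ⊢
      generalize hZ2 : (sc u + 1) * (q - 1) = Z2 at hmm ⊢
      omega
    · simp only [hee, if_neg hA]
      omega
  have htot : (∑ i, V i) + D ≤ (∑ u ∈ shifts, ee u) + q * (q - 1) + (q - 1) := by
    have hA_in : A ∈ shifts := Finset.mem_insert_self _ _
    have h1 : (∑ i, V i) + D = ∑ u ∈ shifts, (T u + (if u = A then D else 0)) := by
      rw [Finset.sum_add_distrib, hTsum, Finset.sum_ite_eq' shifts A (fun _ => D)]
      simp [hA_in]
    have h2 : ∑ u ∈ shifts, (ee u + sc u * (q - 1) + (if u = A then q - 1 else 0))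
        = (∑ u ∈ shifts, ee u) + q * (q - 1) + (q - 1) := by
      rw [Finset.sum_add_distrib, Finset.sum_add_distrib, ← Finset.sum_mul, hscsum,
        Finset.sum_ite_eq' shifts A (fun _ => q - 1)]
      simp [hA_in]
    rw [h1, ← h2]
    exact Finset.sum_le_sum hper
  have hdeg := emat_det_deg U V hdet
  have hB : 2 * (∑ i : Fin q, (i : ℕ)) = q * (q - 1) := by
    rw [Fin.sum_univ_eq_sum_range (fun i => i) q, mul_comm]
    exact Finset.sum_range_id_mul_two q
  have hqq : q * (q - 1) = q * q - q := by
    cases q with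
    | zero => simp
    | succ q' =>
      have h1 : (q' + 1) * (q' + 1) = (q' + 1) * q' + (q' + 1) := by ring
      simp only [Nat.add_sub_cancel]
      omega
  have hkey : D + (∑ i : Fin q, (i : ℕ)) ≤ q * (q - 1) + (q - 1) := by
    generalize hP : q * (q - 1) = P at htot ⊢
    omega
  have hqle : q ≤ q * q := Nat.le_mul_of_pos_left q hq1
  generalize hP : q * (q - 1) = P at hB hqq hkey ⊢
  generalize hP2 : q * q = P2 at hqq hqle ⊢
  omega

lemma ratio {s p : F[X]} (hs : s ≠ 0) (h : s * derivative p = derivative s * p) :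
    ∃ lam : F, p = C lam * s := by
  classical
  set g : F[X] := GCDMonoid.gcd p s with hg
  have hg0 : g ≠ 0 := fun h0 => hs ((gcd_eq_zero_iff p s).mp h0).2
  have hdp : g ∣ p := gcd_dvd_left p s
  have hds : g ∣ s := gcd_dvd_right p s
  have hp1 : p = g * (p / g) := (EuclideanDomain.mul_div_cancel' hg0 hdp).symm
  have hs1 : s = g * (s / g) := (EuclideanDomain.mul_div_cancel' hg0 hds).symm
  set p1 : F[X] := p / g
  set s1 : F[X] := s / g
  have hco : IsCoprime p1 s1 := isCoprime_div_gcd_div_gcd hs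
  have hs10 : s1 ≠ 0 := fun h0 => hs (by rw [hs1, h0, mul_zero])
  have key : s1 * derivative p1 = derivative s1 * p1 := by
    have h' := h
    rw [hp1, hs1, derivative_mul, derivative_mul] at h'
    have key2 : (g * g) * (s1 * derivative p1) = (g * g) * (derivative s1 * p1) := by
      linear_combination h'
    exact mul_left_cancel₀ (mul_ne_zero hg0 hg0) key2
  have hdvd : s1 ∣ derivative s1 :=
    hco.symm.dvd_of_dvd_mul_right ⟨derivative p1, key.symm⟩
  have hs1' : derivative s1 = 0 := by
    by_contra hne
    have hd : natDegree s1 ≠ 0 := by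
      intro h0
      exact hne (by rw [Polynomial.eq_C_of_natDegree_eq_zero h0]; simp)
    have h1 := Polynomial.natDegree_le_of_dvd hdvd hne
    have h2 := Polynomial.natDegree_derivative_lt hd
    omega
  have hp1' : derivative p1 = 0 := by
    have : s1 * derivative p1 = 0 := by rw [key, hs1', zero_mul]
    rcases mul_eq_zero.mp this with h | h
    · exact absurd h hs10
    · exact h
  have hcsC : s1 = C (s1.coeff 0) :=
    Polynomial.eq_C_of_natDegree_eq_zero
      (Polynomial.natDegree_eq_zero_of_derivative_eq_zero hs1')
  have hcpC : p1 = C (p1.coeff 0) :=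
    Polynomial.eq_C_of_natDegree_eq_zero
      (Polynomial.natDegree_eq_zero_of_derivative_eq_zero hp1')
  have hcs0 : s1.coeff 0 ≠ 0 := fun h0 => hs10 (by rw [hcsC, h0, map_zero])
  obtain ⟨cs, hcs⟩ : ∃ cs, s1 = C cs := ⟨_, hcsC⟩
  obtain ⟨cp, hcp⟩ : ∃ cp, p1 = C cp := ⟨_, hcpC⟩
  have hcs0' : cs ≠ 0 := fun h0 => hs10 (by rw [hcs, h0, map_zero])
  refine ⟨cp * cs⁻¹, ?_⟩
  rw [hp1, hs1, hcp, hcs]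
  calc g * C cp = g * C ((cp * cs⁻¹) * cs) := by
        congr 1; congr 1; field_simp
    _ = C (cp * cs⁻¹) * (g * C cs) := by rw [C_mul]; ring

lemma onestep {q : ℕ} (P : Fin q → F[X]) (f : F[X])
    (hM : (dmat P).det ≠ 0) (hN : (dmat (Fin.snoc P f)).det = 0) :
    ∃ lam : Fin q → F, f = ∑ i, lam i • P i := by
  classical
  obtain ⟨w, hw0, hww⟩ := Matrix.exists_vecMul_eq_zero_iff.mpr hN
  have hcomp : ∀ j : Fin (q+1), ∑ i, w i * dmat (Fin.snoc P f) i j = 0 := by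
    intro j
    have := congrFun hww j
    simpa [Matrix.vecMul, dotProduct] using this
  have hwlast : w (Fin.last q) ≠ 0 := by
    intro h0
    apply hM
    rw [← Matrix.exists_vecMul_eq_zero_iff]
    refine ⟨fun i => w i.castSucc, ?_, ?_⟩
    · intro hz
      apply hw0
      funext i
      induction i using Fin.lastCases with
      | last => exact h0
      | cast j => exact congrFun hz j
    · funext j
      have h1 := hcomp j.castSucc
      rw [Fin.sum_univ_castSucc, h0, zero_mul, add_zero] at h1
      simp only [dmat, Matrix.of_apply, Fin.snoc_castSucc, Fin.coe_castSucc] at h1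
      simpa [Matrix.vecMul, dotProduct, dmat] using h1
  have hE : ∀ jn : ℕ, jn ≤ q →
      w (Fin.last q) * derivative^[jn] f
        + ∑ i : Fin q, w i.castSucc * derivative^[jn] (P i) = 0 := by
    intro jn hj
    have h1 := hcomp ⟨jn, by omega⟩
    rw [Fin.sum_univ_castSucc] at h1
    simp only [dmat, Matrix.of_apply, Fin.snoc_castSucc, Fin.snoc_last, Fin.val_mk] at h1
    linear_combination h1
  have hdelta : ∀ j : Fin q,
      ∑ i, (w (Fin.last q) * derivative (w i.castSucc)
          - derivative (w (Fin.last q)) * w i.castSucc) * derivative^[(j : ℕ)] (P i) = 0 := by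
    intro j
    have h1 := hE (j : ℕ) (le_of_lt j.isLt)
    have h2 := hE ((j : ℕ) + 1) (by omega)
    have h3 := congrArg derivative h1
    rw [derivative_add, derivative_mul, derivative_sum, derivative_zero] at h3
    simp only [derivative_mul] at h3
    rw [Finset.sum_add_distrib] at h3
    simp only [← Function.iterate_succ_apply' derivative (j : ℕ)] at h3
    simp only [sub_mul]
    rw [Finset.sum_sub_distrib]
    simp only [mul_assoc]
    rw [← Finset.mul_sum, ← Finset.mul_sum]
    linear_combination (w (Fin.last q)) * h3 - (w (Fin.last q)) * h2
      - (derivative (w (Fin.last q))) * h1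
  have hzero : ∀ i : Fin q, w (Fin.last q) * derivative (w i.castSucc)
      - derivative (w (Fin.last q)) * w i.castSucc = 0 := by
    have hvec : (fun i : Fin q => w (Fin.last q) * derivative (w i.castSucc)
        - derivative (w (Fin.last q)) * w i.castSucc) ᵥ* dmat P = 0 := by
      funext j
      simpa [Matrix.vecMul, dotProduct, dmat] using hdelta j
    intro i
    have h4 : ((fun i : Fin q => w (Fin.last q) * derivative (w i.castSucc)
        - derivative (w (Fin.last q)) * w i.castSucc) ᵥ* (dmat P * (dmat P).adjugate)) = 0 := by
      rw [← Matrix.vecMul_vecMul, hvec, Matrix.zero_vecMul]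
    rw [Matrix.mul_adjugate, Matrix.smul_one_eq_diagonal] at h4
    have h5 := congrFun h4 i
    rw [Matrix.vecMul_diagonal] at h5
    simp only [Pi.zero_apply] at h5
    rcases mul_eq_zero.mp h5 with h | h
    · exact h
    · exact absurd h hM
  have hlam : ∀ i : Fin q, ∃ lam : F, w i.castSucc = C lam * w (Fin.last q) := by
    intro i
    exact ratio hwlast (by have := hzero i; linear_combination this)
  choose lam hlam using hlam
  refine ⟨fun i => - lam i, ?_⟩
  have h0 := hE 0 (Nat.zero_le q)
  simp only [Function.iterate_zero, id_eq] at h0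
  have h0' : w (Fin.last q) * f + ∑ i, C (lam i) * w (Fin.last q) * P i = 0 := by
    have hss : ∑ i, C (lam i) * w (Fin.last q) * P i = ∑ i : Fin q, w i.castSucc * P i :=
      Finset.sum_congr rfl fun i _ => by rw [hlam i]
    rw [hss]; exact h0
  apply mul_left_cancel₀ hwlast
  rw [Finset.mul_sum]
  simp only [smul_eq_C_mul]
  have hneg : ∑ i, w (Fin.last q) * (C (- lam i) * P i)
      = - ∑ i, C (lam i) * w (Fin.last q) * P i := by
    rw [← Finset.sum_neg_distrib]
    exact Finset.sum_congr rfl fun i _ => by rw [map_neg]; ring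
  rw [hneg]
  linear_combination h0'


end Stmt8Aux

theorem stmt8 {F : Type*} [Field F] [CharZero F] {d k l : ℕ} (hd : 0 < d)
    (α a : Fin k → F) (ha : Function.Injective a) (hα : α ≠ 0)
    (β b : Fin l → F) (e : Fin l → ℕ) (he : ∀ i, e i < d)
    (heq : ∑ i, C (α i) * (X - C (a i)) ^ d = ∑ i, C (β i) * (X - C (b i)) ^ e i) :
    Real.sqrt (2 * (d + 1)) < (k : ℝ) + l := by
  classical
  obtain ⟨i0, hi0⟩ : ∃ i0, α i0 ≠ 0 := by
    by_contra hcon; push_neg at hcon; exact hα (funext hcon)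
  have hk1 : 0 < k := i0.pos
  have key : 2 * (d + 1) < (k + l) * (k + l) := by
    set pp : F × ℕ → F[X] := fun r => (X - C r.1) ^ r.2 with hpp
    set R : Finset (F × ℕ) :=
      ((Finset.univ.image (fun i => (a i, d))).erase (a i0, d))
        ∪ Finset.univ.image (fun i => (b i, e i)) with hR
    have hstar_mem : (X - C (a i0)) ^ d ∈ Submodule.span F (pp '' (R : Set (F × ℕ))) := by
      have hrel : C (α i0) * (X - C (a i0)) ^ d
          = ∑ i, C (β i) * (X - C (b i)) ^ e i
            - ∑ i ∈ Finset.univ.erase i0, C (α i) * (X - C (a i)) ^ d := by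
        rw [← heq, ← Finset.add_sum_erase _ _ (Finset.mem_univ i0)]
        ring
      have h2 : (X - C (a i0)) ^ d
          = (α i0)⁻¹ • (∑ i, C (β i) * (X - C (b i)) ^ e i
            - ∑ i ∈ Finset.univ.erase i0, C (α i) * (X - C (a i)) ^ d) := by
        rw [← hrel, smul_eq_C_mul, ← mul_assoc, ← C_mul, inv_mul_cancel₀ hi0, C_1, one_mul]
      rw [h2]
      apply Submodule.smul_mem
      apply Submodule.sub_mem
      · apply Submodule.sum_mem
        intro i _
        rw [← smul_eq_C_mul]
        apply Submodule.smul_mem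
        apply Submodule.subset_span
        refine ⟨(b i, e i), ?_, rfl⟩
        rw [Finset.mem_coe, hR]
        exact Finset.mem_union_right _ (Finset.mem_image_of_mem _ (Finset.mem_univ i))
      · apply Submodule.sum_mem
        intro i hi
        rw [← smul_eq_C_mul]
        apply Submodule.smul_mem
        apply Submodule.subset_span
        refine ⟨(a i, d), ?_, rfl⟩
        rw [Finset.mem_coe, hR]
        apply Finset.mem_union_left
        rw [Finset.mem_erase]
        refine ⟨?_, Finset.mem_image_of_mem _ (Finset.mem_univ i)⟩
        intro hcon
        have hii : a i = a i0 := congrArg Prod.fst hcon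
        exact (Finset.mem_erase.mp hi).1 (ha hii)
    let Pq : ℕ → Prop := fun m => ∃ φ : Fin m → F × ℕ,
      (∀ i, φ i ∈ R) ∧ Function.Injective φ ∧ (Stmt8Aux.dmat (fun i => pp (φ i))).det ≠ 0
    have h0 : Pq 0 := ⟨Fin.elim0, fun i => i.elim0, fun i => i.elim0, by
      rw [Matrix.det_fin_zero]; exact one_ne_zero⟩
    have hbd : ∀ m, Pq m → m ≤ R.card := by
      rintro m ⟨φ, hmem, hinj, -⟩
      have h1 := Finset.card_le_card_of_injOn (s := Finset.univ) (t := R) φ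
        (fun i _ => hmem i) hinj.injOn
      simpa using h1
    obtain ⟨q, hPq, hmax⟩ : ∃ n, Pq n ∧ ∀ m, n < m → ¬ Pq m := by
      refine ⟨Nat.findGreatest Pq R.card, Nat.findGreatest_spec (Nat.zero_le _) h0, ?_⟩
      intro m hm hPm
      rcases le_or_gt m R.card with hmc | hmc
      · exact Nat.findGreatest_is_greatest hm hmc hPm
      · exact absurd (hbd m hPm) (by omega)
    obtain ⟨φ, hmem, hinj, hdet⟩ := hPq
    have hspan : ∀ r ∈ R, pp r ∈ Submodule.span F (Set.range fun i => pp (φ i)) := by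
      intro r hr
      by_cases hrin : ∃ i, φ i = r
      · obtain ⟨i, rfl⟩ := hrin
        exact Submodule.subset_span (Set.mem_range_self i)
      · push_neg at hrin
        have hsnoc_inj : Function.Injective (Fin.snoc φ r : Fin (q+1) → F × ℕ) := by
          intro x y hxy
          rcases Fin.eq_castSucc_or_eq_last x with ⟨x', rfl⟩ | rfl <;>
            rcases Fin.eq_castSucc_or_eq_last y with ⟨y', rfl⟩ | rfl
          · rw [Fin.snoc_castSucc, Fin.snoc_castSucc] at hxy
            exact congrArg Fin.castSucc (hinj hxy)
          · rw [Fin.snoc_castSucc, Fin.snoc_last] at hxy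
            exact absurd hxy (hrin x')
          · rw [Fin.snoc_last, Fin.snoc_castSucc] at hxy
            exact absurd hxy.symm (hrin y')
          · rfl
        have hdet0 : (Stmt8Aux.dmat (Fin.snoc (fun i => pp (φ i)) (pp r))).det = 0 := by
          by_contra hdd
          apply hmax (q + 1) (lt_add_one q)
          refine ⟨Fin.snoc φ r, ?_, hsnoc_inj, ?_⟩
          · intro i
            induction i using Fin.lastCases with
            | last => rw [Fin.snoc_last]; exact hr
            | cast j => rw [Fin.snoc_castSucc]; exact hmem j
          · have hfeq : (fun i => pp ((Fin.snoc φ r : Fin (q+1) → F × ℕ) i))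
                = Fin.snoc (fun i => pp (φ i)) (pp r) :=
              Fin.comp_snoc pp φ r
            rw [hfeq]; exact hdd
        obtain ⟨lam, hlam⟩ := Stmt8Aux.onestep (fun i => pp (φ i)) (pp r) hdet hdet0
        rw [hlam]
        exact Submodule.sum_mem _ fun i _ =>
          Submodule.smul_mem _ _ (Submodule.subset_span (Set.mem_range_self i))
    have hstar2 : (X - C (a i0)) ^ d
        ∈ Submodule.span F (Set.range fun i => pp (φ i)) := by
      have hle : Submodule.span F (pp '' (R : Set (F × ℕ)))
          ≤ Submodule.span F (Set.range fun i => pp (φ i)) := by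
        apply Submodule.span_le.mpr
        rintro x ⟨r, hrR, rfl⟩
        exact hspan r (by exact_mod_cast hrR)
      exact hle hstar_mem
    obtain ⟨c, hcsum⟩ := (Submodule.mem_span_range_iff_exists_fun F).mp hstar2
    have hc' : (X - C (a i0)) ^ d = ∑ i, C (c i) * (X - C ((φ i).1)) ^ ((φ i).2) := by
      rw [← hcsum]
      exact Finset.sum_congr rfl fun i _ => by rw [smul_eq_C_mul]
    have hnotR : ((a i0, d) : F × ℕ) ∉ R := by
      rw [hR]
      simp only [Finset.mem_union, Finset.mem_erase, Finset.mem_image, Finset.mem_univ,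
        true_and, not_or]
      constructor
      · intro hcon; exact hcon.1 rfl
      · rintro ⟨i, hbi⟩
        have hei : e i = d := congrArg Prod.snd hbi
        exact absurd hei (Nat.ne_of_lt (he i))
    have hne : ∀ i, (((φ i).1 : F), (φ i).2) ≠ (a i0, d) := by
      intro i hcon
      apply hnotR
      have hphi : φ i = (a i0, d) := by
        rw [← Prod.mk.eta (p := φ i)]; exact hcon
      rw [← hphi]; exact hmem i
    have hdet' : (Stmt8Aux.emat (fun i => (φ i).1) (fun i => (φ i).2)).det ≠ 0 := by
      rw [← Stmt8Aux.dmat_eq_emat]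
      have hfe : (fun i => (X - C ((φ i).1)) ^ ((φ i).2)) = fun i => pp (φ i) := by
        funext i; rw [hpp]
      rw [hfe]; exact hdet
    have hmain := Stmt8Aux.main_ineq (fun i => (φ i).1) (fun i => (φ i).2) (a i0) d hd
      hne hdet' c hc'
    have hqcard : q ≤ R.card := hbd q ⟨φ, hmem, hinj, hdet⟩
    have hRcard : R.card ≤ (k - 1) + l := by
      refine le_trans (Finset.card_union_le _ _) ?_
      have h1 : ((Finset.univ.image fun i : Fin k => ((a i, d) : F × ℕ)).erase (a i0, d)).card
          = k - 1 := by
        rw [Finset.card_erase_of_mem (Finset.mem_image_of_mem _ (Finset.mem_univ i0))]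
        rw [Finset.card_image_of_injective _ (fun i j hij => ha (congrArg Prod.fst hij))]
        simp
      have h2 : (Finset.univ.image fun i : Fin l => ((b i, e i) : F × ℕ)).card ≤ l := by
        refine le_trans Finset.card_image_le ?_
        simp
      omega
    have hq1 : q ≤ k + l - 1 := by omega
    have hmono : q * q + q ≤ (k + l - 1) * (k + l - 1) + (k + l - 1) :=
      Nat.add_le_add (Nat.mul_le_mul hq1 hq1) hq1
    obtain ⟨t, ht⟩ : ∃ t, k + l = t + 1 := ⟨k + l - 1, by omega⟩
    rw [ht]
    have hsimp : (t + 1) - 1 = t := by omega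
    rw [ht, hsimp] at hmono
    have hexp : (t + 1) * (t + 1) = t * t + t + (t + 1) := by ring
    have hqq1 : q * (q - 1) = q * q - q := by
      cases q with
      | zero => simp
      | succ q' =>
        simp only [Nat.add_sub_cancel]
        have hr : (q' + 1) * (q' + 1) = (q' + 1) * q' + (q' + 1) := by ring
        omega
    have hqle : q ≤ q * q := by
      rcases Nat.eq_zero_or_pos q with h | h
      · simp [h]
      · exact Nat.le_mul_of_pos_left q h
    generalize hgen1 : q * q = QQ at hmain hqq1 hmono hqle
    generalize hgen2 : q * (q - 1) = QP at hmain hqq1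
    generalize hgen3 : t * t = TT at hmono hexp
    generalize hgen4 : (t + 1) * (t + 1) = SS at hexp ⊢
    omega
  have hpos : (0 : ℝ) < (k : ℝ) + l := by
    have : (0 : ℝ) < (k : ℝ) := by exact_mod_cast hk1
    positivity
  have hcast : ((k : ℝ) + l) = ((k + l : ℕ) : ℝ) := by push_cast; ring
  rw [hcast] at hpos ⊢
  rw [Real.sqrt_lt' hpos]
  have : ((2 * (d + 1) : ℕ) : ℝ) < (((k + l) * (k + l) : ℕ) : ℝ) := by exact_mod_cast key
  calc (2 : ℝ) * ((d : ℝ) + 1) = ((2 * (d + 1) : ℕ) : ℝ) := by push_cast; ring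
    _ < (((k + l) * (k + l) : ℕ) : ℝ) := this
    _ = ((k + l : ℕ) : ℝ) ^ 2 := by push_cast; ring
end

section
/- Let f ∈ F[x] have degree d. Either f = α(x - a)^d for some α, a ∈ F, or Waring_F(f) · Sparsest_F(f) ≥ d + 1. -/
open Polynomial

/-- The Waring rank of a univariate polynomial `f` of degree `d`: the least `s` such that
`f = ∑_{i=1}^s α_i (x - a_i)^d`. -/
noncomputable def waringRank {F : Type*} [Field F] (f : F[X]) : ℕ :=
  sInf {s | ∃ α a : Fin s → F, f = ∑ i, C (α i) * (X - C (a i)) ^ f.natDegree}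

/-- The sparsest shift complexity of `f`: the least `s` such that
`f = ∑_{i=1}^s α_i (x - a)^{e_i}` for a single shift `a`. -/
noncomputable def sparsestShift {F : Type*} [Field F] (f : F[X]) : ℕ :=
  sInf {s | ∃ (α : Fin s → F) (c : F) (e : Fin s → ℕ), f = ∑ i, C (α i) * (X - C c) ^ e i}

open Finset Matrix

lemma waring_exists {F : Type*} [Field F] [CharZero F] (d : ℕ) (f : F[X])
    (hf : f.degree < ((d+1 : ℕ) : WithBot ℕ)) :
    ∃ α a : Fin (d+1) → F, f = ∑ i, C (α i) * (X - C (a i)) ^ d := by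
  classical
  set n := d + 1 with hn
  have hvmem : ∀ j : Fin n, (X - C ((j : ℕ) : F)) ^ d ∈ degreeLT F n := by
    intro j
    rw [mem_degreeLT, degree_pow, degree_X_sub_C]
    simp only [nsmul_eq_mul, mul_one]
    exact_mod_cast (by omega : (d : ℕ) < n)
  set v : Fin n → degreeLT F n := fun j => ⟨(X - C ((j : ℕ) : F)) ^ d, hvmem j⟩ with hv
  have hli : LinearIndependent F v := by
    rw [Fintype.linearIndependent_iff]
    intro g hg
    have hpoly : ∑ j : Fin n, g j • (X - C ((j : ℕ) : F)) ^ d = 0 := by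
      have := congrArg (Subtype.val) hg
      simpa [v] using this
    set x : Fin n → F := fun j => -((j : ℕ) : F) with hx
    have hcoeff : ∀ m : Fin n, ∑ j : Fin n, (Matrix.vandermonde x)ᵀ m j * g j = 0 := by
      intro m
      have h1 := congrArg (fun p => coeff p (d - (m : ℕ))) hpoly
      simp only [finset_sum_coeff, coeff_smul, coeff_zero] at h1
      have hmd : (m : ℕ) ≤ d := by omega
      have h2 : ∀ j : Fin n, ((X - C ((j : ℕ) : F)) ^ d).coeff (d - (m : ℕ))
          = x j ^ (m : ℕ) * (d.choose (d - (m : ℕ)) : F) := by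
        intro j
        have : (X - C ((j : ℕ) : F)) = X + C (x j) := by simp [hx, sub_eq_add_neg]
        rw [this, coeff_X_add_C_pow]
        congr 2
        omega
      simp only [h2, smul_eq_mul] at h1
      have hch : (d.choose (d - (m : ℕ)) : F) ≠ 0 := by
        exact_mod_cast Nat.cast_ne_zero.mpr (Nat.choose_pos (by omega)).ne'
      have h3 : (∑ j : Fin n, g j * x j ^ (m : ℕ)) * (d.choose (d - (m : ℕ)) : F) = 0 := by
        rw [Finset.sum_mul]; convert h1 using 2 with j; ring
      have h4 := (mul_eq_zero.mp h3).resolve_right hch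
      rw [← h4]
      apply Finset.sum_congr rfl
      intro j _
      simp [Matrix.vandermonde, mul_comm]
    have hdet : (Matrix.vandermonde x)ᵀ.det ≠ 0 := by
      rw [Matrix.det_transpose, Matrix.det_vandermonde_ne_zero_iff]
      intro i j hij
      have : ((i : ℕ) : F) = ((j : ℕ) : F) := by
        have := neg_injective hij
        exact this
      exact Fin.ext (Nat.cast_injective this)
    have := Matrix.eq_zero_of_mulVec_eq_zero hdet (v := g) (by
      funext m; exact hcoeff m)
    exact fun j => congrFun this j
  have hcard : Fintype.card (Fin n) = Module.finrank F (degreeLT F n) := by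
    rw [Fintype.card_fin, (Polynomial.degreeLTEquiv F n).finrank_eq]
    simp
  have : Nonempty (Fin n) := ⟨⟨0, by omega⟩⟩
  set b := basisOfLinearIndependentOfCardEqFinrank hli hcard with hb
  have hfdlt : f ∈ degreeLT F n := mem_degreeLT.mpr (by exact_mod_cast hf)
  refine ⟨fun j => b.repr ⟨f, hfdlt⟩ j, fun j => ((j : ℕ) : F), ?_⟩
  have := b.sum_repr ⟨f, hfdlt⟩
  have hcb : ⇑b = v := coe_basisOfLinearIndependentOfCardEqFinrank hli hcard
  rw [hcb] at this
  have := congrArg (Subtype.val) this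
  simp only [AddSubmonoidClass.coe_finset_sum, SetLike.val_smul, v] at this
  exact this.symm.trans (Finset.sum_congr rfl fun j _ => smul_eq_C_mul _)

lemma power_sum_zero_of_window {F : Type*} [Field F] {s : ℕ} (α b : Fin s → F)
    (m0 : ℕ) (hm0 : 1 ≤ m0)
    (hwin : ∀ j < s, (∑ i, α i * b i ^ (m0 + j)) = 0) :
    ∀ m, 1 ≤ m → (∑ i, α i * b i ^ m) = 0 := by
  classical
  set q : ℕ → F := fun m => ∑ i, α i * b i ^ m with hq
  set B : Finset F := (Finset.univ.image b).erase 0 with hB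
  set r : ℕ := B.card with hr
  have hrs : r ≤ s := by
    calc r ≤ (Finset.univ.image b).card := Finset.card_erase_le
      _ ≤ (Finset.univ : Finset (Fin s)).card := Finset.card_image_le
      _ = s := by simp
  rcases Nat.eq_zero_or_pos r with hr0 | hrpos
  · -- all b i = 0
    have hBempty : B = ∅ := Finset.card_eq_zero.mp hr0
    have hball : ∀ i, b i = 0 := by
      intro i
      by_contra hne
      have : b i ∈ B := Finset.mem_erase.mpr ⟨hne, Finset.mem_image_of_mem b (mem_univ i)⟩
      simp [hBempty] at this
    intro m hm
    apply Finset.sum_eq_zero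
    intro i _
    rw [hball i, zero_pow (by omega), mul_zero]
  set P : F[X] := ∏ β ∈ B, (X - C β) with hP
  have hPmonic : P.Monic := monic_prod_of_monic _ _ fun β _ => monic_X_sub_C β
  have hPdeg : P.natDegree = r := by
    rw [hP, natDegree_prod _ _ (fun β _ => X_sub_C_ne_zero β)]
    simp [hr]
  have hP0 : P.coeff 0 ≠ 0 := by
    rw [coeff_zero_eq_eval_zero, hP, eval_prod, Finset.prod_ne_zero_iff]
    intro β hβ
    simp only [eval_sub, eval_X, eval_C, zero_sub, neg_ne_zero]
    exact Finset.ne_of_mem_erase hβ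
  have hPr : P.coeff r = 1 := by rw [← hPdeg]; exact hPmonic.coeff_natDegree
  have heval : ∀ y : F, P.eval y = ∑ k ∈ Finset.range (r + 1), P.coeff k * y ^ k := fun y =>
    eval_eq_sum_range' (by rw [hPdeg]; omega) y
  have hrec : ∀ m, 1 ≤ m → ∑ k ∈ Finset.range (r + 1), P.coeff k * q (m + k) = 0 := by
    intro m hm
    calc ∑ k ∈ Finset.range (r + 1), P.coeff k * q (m + k)
        = ∑ k ∈ Finset.range (r + 1), ∑ i, P.coeff k * (α i * b i ^ (m + k)) := by
          simp [hq, Finset.mul_sum]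
      _ = ∑ i, ∑ k ∈ Finset.range (r + 1), P.coeff k * (α i * b i ^ (m + k)) :=
          Finset.sum_comm
      _ = ∑ i, α i * b i ^ m * P.eval (b i) := by
          refine Finset.sum_congr rfl fun i _ => ?_
          rw [heval (b i), Finset.mul_sum]
          refine Finset.sum_congr rfl fun k _ => ?_
          rw [pow_add]; ring
      _ = 0 := by
          apply Finset.sum_eq_zero
          intro i _
          by_cases hbi : b i = 0
          · rw [hbi, zero_pow (by omega), mul_zero, zero_mul]
          · have hmem : b i ∈ B :=
              Finset.mem_erase.mpr ⟨hbi, Finset.mem_image_of_mem b (mem_univ i)⟩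
            have : P.eval (b i) = 0 := by
              rw [hP, eval_prod]
              exact Finset.prod_eq_zero hmem (by simp)
            rw [this, mul_zero]
  -- forward propagation
  have hfwd : ∀ m, 1 ≤ m → (∀ j < r, q (m + j) = 0) → q (m + r) = 0 := by
    intro m hm hz
    have h := hrec m hm
    rw [Finset.sum_range_succ] at h
    have h1 : ∑ k ∈ Finset.range r, P.coeff k * q (m + k) = 0 :=
      Finset.sum_eq_zero fun k hk => by rw [hz k (Finset.mem_range.mp hk), mul_zero]
    rw [h1, zero_add, hPr, one_mul] at h
    exact h
  -- backward propagation
  have hbwd : ∀ m, 1 ≤ m → (∀ j < r, q (m + 1 + j) = 0) → q m = 0 := by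
    intro m hm hz
    have h := hrec m hm
    rw [Finset.sum_range_succ'] at h
    have h1 : ∑ k ∈ Finset.range r, P.coeff (k + 1) * q (m + (k + 1)) = 0 :=
      Finset.sum_eq_zero fun k hk => by
        have : m + (k + 1) = m + 1 + k := by omega
        rw [this, hz k (Finset.mem_range.mp hk), mul_zero]
    rw [h1, zero_add, add_zero] at h
    exact (mul_eq_zero.mp h).resolve_left hP0
  -- window of length r at m0
  have hwin' : ∀ j < r, q (m0 + j) = 0 := fun j hj => hwin j (lt_of_lt_of_le hj hrs)
  -- upward: all windows above m0
  have hup : ∀ nn, ∀ j < r, q (m0 + nn + j) = 0 := by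
    intro nn
    induction nn with
    | zero => exact hwin'
    | succ nn ih =>
      intro j hj
      rcases Nat.lt_or_ge (j + 1) r with hcase | hcase
      · have : m0 + (nn + 1) + j = m0 + nn + (j + 1) := by omega
        rw [this]
        exact ih (j + 1) hcase
      · have hjr : j + 1 = r := by omega
        have : m0 + (nn + 1) + j = (m0 + nn) + r := by omega
        rw [this]
        exact hfwd (m0 + nn) (by omega) ih
  -- downward
  have hdownstep : ∀ m, 1 ≤ m → (∀ j < r, q (m + 1 + j) = 0) → (∀ j < r, q (m + j) = 0) := by
    intro m hm hz j hj
    rcases Nat.eq_zero_or_pos j with hj0 | hjpos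
    · rw [hj0, add_zero]
      exact hbwd m hm hz
    · have : m + j = m + 1 + (j - 1) := by omega
      rw [this]
      exact hz (j - 1) (by omega)
  have hdown : ∀ nn m, 1 ≤ m → m + nn = m0 → ∀ j < r, q (m + j) = 0 := by
    intro nn
    induction nn with
    | zero => intro m hm hmm; rw [Nat.add_zero] at hmm; rw [hmm]; exact hwin'
    | succ nn ih =>
      intro m hm hmm
      exact hdownstep m hm (ih (m + 1) (by omega) (by omega))
  intro m hm
  rcases Nat.lt_or_ge m m0 with hcase | hcase
  · have := hdown (m0 - m) m hm (by omega) 0 hrpos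
    rwa [add_zero] at this
  · have := hup (m - m0) 0 hrpos
    have heq : m0 + (m - m0) + 0 = m := by omega
    rwa [heq] at this

theorem stmt10 {F : Type*} [Field F] [CharZero F] (f : F[X]) (d : ℕ)
    (hd : f.natDegree = d) :
    (∃ α c : F, f = C α * (X - C c) ^ d) ∨ d + 1 ≤ waringRank f * sparsestShift f := by
  classical
  by_cases hf0 : f = 0
  · exact Or.inl ⟨0, 0, by simp [hf0]⟩
  rcases Nat.eq_zero_or_pos d with hd0 | hdpos
  · left
    refine ⟨f.coeff 0, 0, ?_⟩
    rw [hd0, pow_zero, mul_one]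
    exact eq_C_of_natDegree_eq_zero (hd.trans hd0)
  -- nonemptiness of the Waring set
  have hWne : {s | ∃ α a : Fin s → F, f = ∑ i, C (α i) * (X - C (a i)) ^ f.natDegree}.Nonempty := by
    obtain ⟨α, a, hrep⟩ := waring_exists d f (by
      refine lt_of_le_of_lt degree_le_natDegree ?_
      rw [hd]; exact_mod_cast Nat.lt_succ_self d)
    exact ⟨d + 1, α, a, by rwa [hd]⟩
  have hSne : {s | ∃ (α : Fin s → F) (c : F) (e : Fin s → ℕ),
      f = ∑ i, C (α i) * (X - C c) ^ e i}.Nonempty := by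
    refine ⟨d + 1, fun i => f.coeff i, 0, fun i => (i : ℕ), ?_⟩
    simp only [C_0, sub_zero]
    rw [Fin.sum_univ_eq_sum_range (fun i => C (f.coeff i) * X ^ i) (d + 1)]
    conv_lhs => rw [f.as_sum_range' (d + 1) (by omega)]
    exact Finset.sum_congr rfl fun i _ => (C_mul_X_pow_eq_monomial).symm
  set s := waringRank f with hs
  set t := sparsestShift f with ht
  obtain ⟨α, a, hrepW⟩ : ∃ α a : Fin s → F, f = ∑ i, C (α i) * (X - C (a i)) ^ f.natDegree :=
    Nat.sInf_mem hWne
  obtain ⟨β, c, e, hrepS⟩ : ∃ (β : Fin t → F) (c : F) (e : Fin t → ℕ),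
      f = ∑ i, C (β i) * (X - C c) ^ e i := Nat.sInf_mem hSne
  rw [hd] at hrepW
  set b : Fin s → F := fun i => c - a i with hb
  set g : F[X] := f.comp (X + C c) with hg
  have hfg : g.comp (X - C c) = f := by
    rw [hg, comp_assoc]
    simp
  have hgne : g ≠ 0 := by
    intro h
    rw [h, zero_comp] at hfg
    exact hf0 hfg.symm
  have hgdeg : g.natDegree = d := by
    rw [hg, natDegree_comp, natDegree_X_add_C, mul_one, hd]
  have hg1 : g = ∑ i, C (α i) * (X + C (b i)) ^ d := by
    rw [hg, hrepW]
    simp only [Polynomial.sum_comp, mul_comp, pow_comp, sub_comp, X_comp, C_comp]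
    refine Finset.sum_congr rfl fun i _ => ?_
    rw [hb]
    congr 1
    rw [map_sub]
    ring
  have hg2 : g = ∑ j, C (β j) * X ^ e j := by
    conv_lhs => rw [hg, hrepS]
    simp only [Polynomial.sum_comp, mul_comp, pow_comp, sub_comp, X_comp, C_comp]
    refine Finset.sum_congr rfl fun j _ => ?_
    congr 2
    ring
  set q : ℕ → F := fun m => ∑ i, α i * b i ^ m with hq
  have hcoeffg : ∀ k, g.coeff k = (d.choose k : F) * q (d - k) := by
    intro k
    rw [hg1, finset_sum_coeff, hq, Finset.mul_sum]
    refine Finset.sum_congr rfl fun i _ => ?_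
    rw [coeff_C_mul, coeff_X_add_C_pow]
    ring
  -- support bound
  have hsupp : g.support ⊆ Finset.univ.image e := by
    intro k hk
    rw [mem_support_iff, hg2, finset_sum_coeff] at hk
    obtain ⟨j, _, hj⟩ := Finset.exists_ne_zero_of_sum_ne_zero hk
    rw [coeff_C_mul, coeff_X_pow] at hj
    have : k = e j := by
      by_contra hne
      rw [if_neg hne, mul_zero] at hj
      exact hj rfl
    exact Finset.mem_image.mpr ⟨j, mem_univ j, this.symm⟩
  have hsupp_card : g.support.card ≤ t := by
    calc g.support.card ≤ (Finset.univ.image e).card := Finset.card_le_card hsupp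
      _ ≤ (Finset.univ : Finset (Fin t)).card := Finset.card_image_le
      _ = t := by simp
  by_cases hqzero : ∀ m, 1 ≤ m → m ≤ d → q m = 0
  · -- f = C (g.coeff d) * (X - C c) ^ d
    left
    have hgc : g = C (g.coeff d) * X ^ d := by
      ext k
      rw [coeff_C_mul, coeff_X_pow]
      by_cases hk : k = d
      · rw [if_pos hk, mul_one, hk]
      · rw [if_neg hk, mul_zero]
        rcases Nat.lt_or_ge k d with hlt | hge
        · rw [hcoeffg k, hqzero (d - k) (by omega) (by omega), mul_zero]
        · exact coeff_eq_zero_of_natDegree_lt (by omega)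
    refine ⟨g.coeff d, c, ?_⟩
    rw [← hfg, hgc]
    simp [mul_comp, pow_comp]
  · right
    push_neg at hqzero
    obtain ⟨mw, hmw1, hmwd, hmwne⟩ := hqzero
    have hspos : 0 < s := by
      rcases Nat.eq_zero_or_pos s with h0 | h
      · exfalso
        apply hmwne
        have huniv : (Finset.univ : Finset (Fin s)) = ∅ := by
          apply Finset.univ_eq_empty_iff.mpr
          rw [h0]
          infer_instance
        simp only [hq, huniv, Finset.sum_empty]
      · exact h
    -- every window of length s inside [1, d] contains a nonzero q
    have hwindow : ∀ u, u < d / s → ∃ m, u * s + 1 ≤ m ∧ m ≤ u * s + s ∧ q m ≠ 0 := by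
      intro u hu
      by_contra hcon
      push_neg at hcon
      have hall := power_sum_zero_of_window α b (u * s + 1) (by omega)
        (fun j hj => hcon (u * s + 1 + j) (by omega) (by omega))
      exact hmwne (hall mw hmw1)
    set L := d / s with hL
    set mf : ℕ → ℕ := fun u => if h : u < L then (hwindow u h).choose else 0 with hmf
    have hmf1 : ∀ u < L, u * s + 1 ≤ mf u := by
      intro u hu
      rw [hmf]; simp only [dif_pos hu]
      exact (hwindow u hu).choose_spec.1
    have hmf2 : ∀ u < L, mf u ≤ u * s + s := by
      intro u hu
      rw [hmf]; simp only [dif_pos hu]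
      exact (hwindow u hu).choose_spec.2.1
    have hmfq : ∀ u < L, q (mf u) ≠ 0 := by
      intro u hu
      rw [hmf]; simp only [dif_pos hu]
      exact (hwindow u hu).choose_spec.2.2
    have hmfd : ∀ u < L, mf u ≤ d := by
      intro u hu
      have h1 := hmf2 u hu
      have h2 : (u + 1) * s ≤ L * s := Nat.mul_le_mul_right s (by omega)
      have h3 : L * s ≤ d := by rw [hL]; exact Nat.div_mul_le_self d s
      have : (u + 1) * s = u * s + s := by ring
      omega
    have hdmem : d ∈ g.support := by
      have : g.coeff d ≠ 0 := by
        rw [← hgdeg]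
        exact mt leadingCoeff_eq_zero.mp hgne
      exact mem_support_iff.mpr this
    have hinj : ∀ u ∈ Finset.range L, ∀ v ∈ Finset.range L,
        d - mf u = d - mf v → u = v := by
      intro u hu v hv huv
      rw [Finset.mem_range] at hu hv
      rcases Nat.lt_trichotomy u v with h | h | h
      · exfalso
        have h1 := hmf2 u hu
        have h2 := hmf1 v hv
        have h3 := hmfd u hu
        have h4 := hmfd v hv
        have : (u + 1) * s ≤ v * s := Nat.mul_le_mul_right s (by omega)
        have : u * s + s ≤ v * s := by nlinarith [this]
        omega
      · exact h
      · exfalso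
        have h1 := hmf2 v hv
        have h2 := hmf1 u hu
        have h3 := hmfd u hu
        have h4 := hmfd v hv
        have : (v + 1) * s ≤ u * s := Nat.mul_le_mul_right s (by omega)
        have : v * s + s ≤ u * s := by nlinarith [this]
        omega
    have hmaps : ∀ u ∈ Finset.range L, d - mf u ∈ g.support.erase d := by
      intro u hu
      rw [Finset.mem_range] at hu
      have hmu1 := hmf1 u hu
      have hmud := hmfd u hu
      refine Finset.mem_erase.mpr ⟨by omega, ?_⟩
      rw [mem_support_iff, hcoeffg]
      have hdd : d - (d - mf u) = mf u := by omega
      rw [hdd]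
      refine mul_ne_zero ?_ (hmfq u hu)
      exact_mod_cast Nat.cast_ne_zero.mpr (Nat.choose_pos (by omega)).ne'
    have hcardL : L ≤ (g.support.erase d).card := by
      have := Finset.card_le_card_of_injOn (fun u => d - mf u) hmaps
        (fun u hu v hv h => hinj u hu v hv h)
      simpa using this
    have hcard2 : (g.support.erase d).card = g.support.card - 1 :=
      Finset.card_erase_of_mem hdmem
    have hsupppos : 1 ≤ g.support.card := Finset.card_pos.mpr ⟨d, hdmem⟩
    have htL : L + 1 ≤ t := by omega
    -- final arithmetic
    have hdm := Nat.div_add_mod d s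
    have hmod : d % s < s := Nat.mod_lt _ hspos
    calc d + 1 ≤ s * L + s := by
          have : s * L = s * (d / s) := by rw [hL]
          omega
      _ = s * (L + 1) := by ring
      _ ≤ s * t := Nat.mul_le_mul_left s htL
end

section
/- For every d ∈ ℕ, the polynomial f_d := ∑_{j ≡ 3 (mod 4), 0 ≤ j ≤ d} 4·C(d,j)·x^{d-j} ∈ ℝ[x] satisfies f_d = (x+1)^d − (x−1)^d + i(x+i)^d − i(x−i)^d when regarded over ℂ; in particular AffPow_ℂ(f_d) ≤ 4. -/
open Polynomial

/-- `affPowRank f` is the least `s` such that `f = ∑_{i=1}^s α_i (x - a_i)^{e_i}`. -/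
noncomputable def affPowRank {F : Type*} [Field F] (f : F[X]) : ℕ :=
  sInf {s | ∃ (α a : Fin s → F) (e : Fin s → ℕ), f = ∑ i, C (α i) * (X - C (a i)) ^ e i}

lemma expand13 (a : ℂ) (d : ℕ) :
    (X + C a) ^ d = ∑ j ∈ Finset.range (d + 1), C (a ^ j * d.choose j) * X ^ (d - j) := by
  rw [add_pow, ← Finset.sum_range_reflect]
  apply Finset.sum_congr rfl
  intro j hj
  rw [Finset.mem_range] at hj
  have hjd : j ≤ d := Nat.lt_succ_iff.mp hj
  have h1 : d + 1 - 1 - j = d - j := by omega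
  have h2 : d - (d - j) = j := by omega
  rw [h1, h2, Nat.choose_symm hjd, ← C_pow, map_mul, C_eq_natCast]
  ring

lemma scalar13 (j : ℕ) :
    ((if j % 4 = 3 then (4:ℂ) else 0)) =
      1 ^ j - (-1) ^ j + Complex.I * Complex.I ^ j - Complex.I * (-Complex.I) ^ j := by
  obtain ⟨q, r, hr, rfl⟩ : ∃ q r, r < 4 ∧ j = 4 * q + r :=
    ⟨j / 4, j % 4, Nat.mod_lt _ (by norm_num), (Nat.div_add_mod j 4).symm⟩
  have h4 : (4 * q + r) % 4 = r := by omega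
  have hI : Complex.I ^ 4 = 1 := by
    rw [show (4:ℕ) = 2*2 from rfl, pow_mul, Complex.I_sq]; ring
  have key : ∀ z : ℂ, z ^ 4 = 1 → z ^ (4 * q + r) = z ^ r := fun z h => by
    rw [pow_add, pow_mul, h, one_pow, one_mul]
  have hnI : (-Complex.I) ^ 4 = 1 := by rw [show ((-Complex.I)^4 : ℂ) = Complex.I ^ 4 by ring, hI]
  rw [h4, key 1 (by norm_num), key (-1) (by norm_num), key _ hI, key _ hnI]
  interval_cases r <;> norm_num [pow_succ, Complex.I_mul_I]

theorem stmt13 (d : ℕ) :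
    (∑ j ∈ (Finset.range (d + 1)).filter fun j => j % 4 = 3,
        C ((4 : ℂ) * d.choose j) * X ^ (d - j)) =
      (X + 1) ^ d - (X - 1) ^ d + C Complex.I * (X + C Complex.I) ^ d
        - C Complex.I * (X - C Complex.I) ^ d ∧
    affPowRank (∑ j ∈ (Finset.range (d + 1)).filter fun j => j % 4 = 3,
        C ((4 : ℂ) * d.choose j) * X ^ (d - j)) ≤ 4 := by
  have key : (∑ j ∈ (Finset.range (d + 1)).filter fun j => j % 4 = 3,
        C ((4 : ℂ) * d.choose j) * X ^ (d - j)) =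
      (X + 1) ^ d - (X - 1) ^ d + C Complex.I * (X + C Complex.I) ^ d
        - C Complex.I * (X - C Complex.I) ^ d := by
    have e1 : (X + 1 : ℂ[X]) ^ d = (X + C 1) ^ d := by norm_num
    have e2 : (X - 1 : ℂ[X]) ^ d = (X + C (-1)) ^ d := by
      rw [map_neg, map_one]; ring_nf
    have e3 : (X - C Complex.I : ℂ[X]) ^ d = (X + C (-Complex.I)) ^ d := by
      rw [map_neg]; ring_nf
    rw [e1, e2, e3, expand13, expand13, expand13, expand13,
      Finset.mul_sum, Finset.mul_sum, ← Finset.sum_sub_distrib, ← Finset.sum_add_distrib,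
      ← Finset.sum_sub_distrib, Finset.sum_filter]
    apply Finset.sum_congr rfl
    intro j hj
    rw [show (if j % 4 = 3 then C ((4:ℂ) * d.choose j) * X ^ (d - j) else 0) =
        C ((if j % 4 = 3 then (4:ℂ) else 0) * d.choose j) * X ^ (d - j) by
      split_ifs <;> simp]
    rw [scalar13 j]
    simp only [map_mul, map_sub, map_add, map_pow, map_one, map_neg, one_pow]
    ring
  refine ⟨key, ?_⟩
  apply Nat.sInf_le
  refine ⟨![1, -1, Complex.I, -Complex.I], ![-1, 1, -Complex.I, Complex.I], fun _ => d, ?_⟩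
  rw [key, Fin.sum_univ_four]
  simp only [Matrix.cons_val_zero, Matrix.cons_val_one, Matrix.head_cons,
    Matrix.cons_val_two, Matrix.cons_val_three, Matrix.tail_cons, map_neg, map_one]
  ring
end

section
/- Let f ∈ F[x] be written as f = ∑_{i=1}^s α_i (x - a_i)^{e_i} with α_i ∈ F nonzero and the a_i ∈ F all distinct. Suppose f satisfies an SDE of order k and shift l, namely ∑_{j=0}^k P_j(x) f^{(j)}(x) = 0 with deg(P_j) ≤ j + l and not all P_j zero. Then for every i such that e_i ≥ k + (k+l)(s−1) + C(s,2), the polynomial (x - a_i)^{e_i} satisfies the same SDE. -/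
open Polynomial Finset

namespace SDE15

variable {F : Type*} [Field F]

/-- coefficient of a product at the sum of degree bounds -/
lemma coeff_prod_of_le {ι : Type*} (s : Finset ι) (f : ι → F[X]) (n : ι → ℕ)
    (h : ∀ i ∈ s, (f i).natDegree ≤ n i) :
    (∏ i ∈ s, f i).coeff (∑ i ∈ s, n i) = ∏ i ∈ s, (f i).coeff (n i) := by
  classical
  induction s using Finset.induction_on with
  | empty => simp
  | insert x s' ha ih =>
    rw [Finset.prod_insert ha, Finset.sum_insert ha, Finset.prod_insert ha,
      coeff_mul_add_eq_of_natDegree_le (h x (Finset.mem_insert_self _ _))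
        ((natDegree_prod_le _ _).trans (Finset.sum_le_sum fun i hi => h i (Finset.mem_insert_of_mem hi))),
      ih fun i hi => h i (Finset.mem_insert_of_mem hi)]

noncomputable def wrM {n : ℕ} (v : Fin n → F[X]) : Matrix (Fin n) (Fin n) F[X] :=
  Matrix.of fun r t => derivative^[(t : ℕ)] (v r)

noncomputable def wr {n : ℕ} (v : Fin n → F[X]) : F[X] := (wrM v).det

lemma wrM_update {n : ℕ} (v : Fin n → F[X]) (p : Fin n) (q : F[X]) :
    wrM (Function.update v p q) = (wrM v).updateRow p (fun t => derivative^[(t : ℕ)] q) := by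
  ext r t
  by_cases h : r = p
  · subst h; simp [wrM, Matrix.updateRow_self]
  · simp [wrM, Matrix.updateRow_ne h, Function.update_of_ne h]

lemma pow_dvd_derivative {q r : F[X]} {m : ℕ} (h : q ^ m ∣ r) : q ^ (m - 1) ∣ derivative r := by
  obtain ⟨u, rfl⟩ := h
  rw [derivative_mul, derivative_pow]
  refine dvd_add (Dvd.dvd.mul_right (Dvd.dvd.mul_right (dvd_mul_left _ _) _) _)
    (Dvd.dvd.mul_right (pow_dvd_pow _ (Nat.sub_le _ _)) _)

lemma pow_dvd_iterate_derivative {q r : F[X]} {m : ℕ} (h : q ^ m ∣ r) (t : ℕ) :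
    q ^ (m - t) ∣ derivative^[t] r := by
  induction t generalizing r m with
  | zero => simpa using h
  | succ t ih =>
    rw [Function.iterate_succ_apply]
    have := ih (pow_dvd_derivative h)
    rwa [Nat.sub_sub, Nat.add_comm 1 t] at this

/-- divisibility of the Wronskian by a power at one column -/
lemma pow_dvd_wr {n : ℕ} (v : Fin n → F[X]) (a : F) (c : ℕ) (r0 : Fin n)
    (hc : (X - C a) ^ c ∣ v r0) : (X - C a) ^ (c - (n - 1)) ∣ wr v := by
  rw [wr, Matrix.det_apply]
  refine Finset.dvd_sum fun σ _ => ?_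
  rw [Units.smul_def, zsmul_eq_mul]
  refine Dvd.dvd.mul_left ?_ _
  have h1 : (X - C a) ^ (c - (n - 1)) ∣ wrM v (σ (σ⁻¹ r0)) (σ⁻¹ r0) := by
    rw [show σ (σ⁻¹ r0) = r0 from σ.apply_symm_apply r0]
    refine dvd_trans (pow_dvd_pow _ ?_) (pow_dvd_iterate_derivative hc _)
    have := (σ⁻¹ r0).isLt
    omega
  exact h1.trans (Finset.dvd_prod_of_mem _ (Finset.mem_univ _))

/-- degree bound for the Wronskian -/
lemma natDegree_wr_le {n : ℕ} (v : Fin n → F[X]) (D : Fin n → ℕ)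
    (hD : ∀ r, (v r).natDegree ≤ D r) (hne : wr v ≠ 0) :
    (wr v).natDegree + n.choose 2 ≤ ∑ r, D r := by
  classical
  have hsum : ∑ t : Fin n, (t : ℕ) = n.choose 2 := by
    rw [Fin.sum_univ_eq_sum_range (fun i => i) n, Finset.sum_range_id, Nat.choose_two_right]
  -- there exists σ with nonzero product
  have hex : ∃ σ : Equiv.Perm (Fin n), (∏ t : Fin n, wrM v (σ t) t) ≠ 0 := by
    by_contra hcon
    push_neg at hcon
    apply hne
    rw [wr, Matrix.det_apply]
    refine Finset.sum_eq_zero fun σ _ => ?_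
    rw [hcon σ, smul_zero]
  obtain ⟨σ0, hσ0⟩ := hex
  have hgood : ∀ t : Fin n, (t : ℕ) ≤ D (σ0 t) := by
    intro t
    by_contra hlt
    push_neg at hlt
    apply hσ0
    refine Finset.prod_eq_zero (Finset.mem_univ t) ?_
    exact iterate_derivative_eq_zero (lt_of_le_of_lt (hD _) hlt)
  have hchoose : n.choose 2 ≤ ∑ r, D r := by
    calc n.choose 2 = ∑ t : Fin n, (t : ℕ) := hsum.symm
    _ ≤ ∑ t : Fin n, D (σ0 t) := Finset.sum_le_sum fun t _ => hgood t
    _ = ∑ r, D r := Equiv.sum_comp σ0 D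
  have hbound : (wr v).natDegree ≤ ∑ r, D r - n.choose 2 := by
    rw [wr, Matrix.det_apply]
    refine natDegree_sum_le_of_forall_le _ _ fun σ _ => ?_
    rw [Units.smul_def, zsmul_eq_mul]
    refine (natDegree_mul_le).trans ?_
    rw [natDegree_intCast, zero_add]
    by_cases hσ : ∀ t : Fin n, (t : ℕ) ≤ D (σ t)
    · have h1 : (∏ t : Fin n, wrM v (σ t) t).natDegree ≤ ∑ t : Fin n, (D (σ t) - (t : ℕ)) := by
        refine (natDegree_prod_le _ _).trans (Finset.sum_le_sum fun t _ => ?_)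
        exact (natDegree_iterate_derivative _ _).trans (Nat.sub_le_sub_right (hD _) _)
      refine h1.trans ?_
      have h2 : ∑ t : Fin n, (D (σ t) - (t : ℕ)) + ∑ t : Fin n, (t : ℕ)
          = ∑ t : Fin n, D (σ t) := by
        rw [← Finset.sum_add_distrib]
        exact Finset.sum_congr rfl fun t _ => Nat.sub_add_cancel (hσ t)
      have h3 : ∑ t : Fin n, D (σ t) = ∑ r, D r := Equiv.sum_comp σ D
      omega
    · push_neg at hσ
      obtain ⟨t, ht⟩ := hσ
      have : (∏ t : Fin n, wrM v (σ t) t) = 0 := by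
        refine Finset.prod_eq_zero (Finset.mem_univ t) ?_
        exact iterate_derivative_eq_zero (lt_of_le_of_lt (hD _) ht)
      rw [this, natDegree_zero]
      exact Nat.zero_le _
  omega

end SDE15

namespace SDE15

variable {F : Type*} [Field F]

lemma sum_single_smul {n : ℕ} (v : Fin n → F[X]) (j : Fin n) (x : F) :
    ∑ r, (Pi.single j x : Fin n → F) r • v r = x • v j := by
  rw [Finset.sum_eq_single_of_mem j (Finset.mem_univ j)]
  · simp
  · intro r _ hr
    rw [Pi.single_eq_of_ne hr, zero_smul]

theorem wr_ne_zero_aux [CharZero F] {n : ℕ} :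
    ∀ (N : ℕ) (v : Fin n → F[X]),
      (∑ r, (v r).natDegree) = N →
      (∀ g : Fin n → F, ∑ r, g r • v r = 0 → ∀ r, g r = 0) →
      wr v ≠ 0 := by
  intro N
  induction N using Nat.strong_induction_on with
  | _ N ih =>
  intro v hN hli
  have hvne : ∀ r, v r ≠ 0 := by
    intro r hr
    have h1 : ∑ r', (Pi.single r (1:F) : Fin n → F) r' • v r' = 0 := by
      rw [sum_single_smul, hr, smul_zero]
    have := hli _ h1 r
    simp at this
  by_cases hinj : Function.Injective fun r => (v r).natDegree
  · -- distinct degrees: compute the top coefficient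
    set d : Fin n → ℕ := fun r => (v r).natDegree with hd
    set N₀ : ℕ := (∑ r, d r) - n.choose 2 with hN₀
    have hsumt : ∑ t : Fin n, (t : ℕ) = n.choose 2 := by
      rw [Fin.sum_univ_eq_sum_range (fun i => i) n, Finset.sum_range_id, Nat.choose_two_right]
    set M : Matrix (Fin n) (Fin n) F :=
      Matrix.of fun i j => ((d i).descFactorial (j : ℕ) : F) with hM
    have key : ∀ σ : Equiv.Perm (Fin n),
        (∏ t : Fin n, wrM v (σ t) t).coeff N₀
          = (∏ t : Fin n, M (σ t) t) * ∏ r, (v r).leadingCoeff := by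
      intro σ
      by_cases hσ : ∀ t : Fin n, (t : ℕ) ≤ d (σ t)
      · have hNsum : ∑ t : Fin n, (d (σ t) - (t:ℕ)) = N₀ := by
          have h2 : ∑ t : Fin n, (d (σ t) - (t:ℕ)) + ∑ t : Fin n, (t : ℕ)
              = ∑ t : Fin n, d (σ t) := by
            rw [← Finset.sum_add_distrib]
            exact Finset.sum_congr rfl fun t _ => Nat.sub_add_cancel (hσ t)
          have h3 : ∑ t : Fin n, d (σ t) = ∑ r, d r := Equiv.sum_comp σ d
          omega
        have hdegle : ∀ t ∈ Finset.univ, (wrM v (σ t) t).natDegree ≤ d (σ t) - (t:ℕ) :=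
          fun t _ => natDegree_iterate_derivative _ _
        rw [← hNsum, coeff_prod_of_le Finset.univ (fun t => wrM v (σ t) t)
          (fun t => d (σ t) - (t:ℕ)) hdegle]
        have hterm : ∀ t : Fin n, (wrM v (σ t) t).coeff (d (σ t) - (t:ℕ))
            = M (σ t) t * (v (σ t)).leadingCoeff := by
          intro t
          show ((derivative^[(t:ℕ)] (v (σ t))).coeff (d (σ t) - (t:ℕ))) = _
          rw [coeff_iterate_derivative, Nat.sub_add_cancel (hσ t)]
          rw [nsmul_eq_mul]
          rfl
        rw [Finset.prod_congr rfl fun t _ => hterm t, Finset.prod_mul_distrib]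
        congr 1
        exact Equiv.prod_comp σ fun r => (v r).leadingCoeff
      · push_neg at hσ
        obtain ⟨t0, ht0⟩ := hσ
        have h1 : (∏ t : Fin n, wrM v (σ t) t) = 0 :=
          Finset.prod_eq_zero (Finset.mem_univ t0) (iterate_derivative_eq_zero ht0)
        have h2 : (∏ t : Fin n, M (σ t) t) = 0 := by
          refine Finset.prod_eq_zero (Finset.mem_univ t0) ?_
          show ((d (σ t0)).descFactorial (t0 : ℕ) : F) = 0
          rw [Nat.descFactorial_eq_zero_iff_lt.mpr ht0, Nat.cast_zero]
        rw [h1, h2, coeff_zero, zero_mul]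
    have hcoeff : (wr v).coeff N₀ = M.det * ∏ r, (v r).leadingCoeff := by
      rw [wr, Matrix.det_apply, Polynomial.finset_sum_coeff, Matrix.det_apply, Finset.sum_mul]
      refine Finset.sum_congr rfl fun σ _ => ?_
      rw [Units.smul_def, Units.smul_def, Polynomial.coeff_smul, key σ, zsmul_eq_mul,
        zsmul_eq_mul, mul_assoc]
    have hdetM : M.det ≠ 0 := by
      have hvdm := Matrix.det_eval_matrixOfPolynomials_eq_det_vandermonde
        (fun i : Fin n => ((d i : F))) (fun j : Fin n => descPochhammer F (j : ℕ))
        (fun j => descPochhammer_natDegree F (j : ℕ))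
        (fun j => monic_descPochhammer F (j : ℕ))
      have hMeq : M = Matrix.of fun i j : Fin n =>
          eval ((d i : F)) (descPochhammer F (j : ℕ)) := by
        ext i j
        exact (descPochhammer_eval_eq_descFactorial F (d i) (j:ℕ)).symm
      rw [hMeq, ← hvdm]
      rw [Matrix.det_vandermonde_ne_zero_iff]
      intro x y hxy
      exact hinj (Nat.cast_injective hxy)
    have hlc : (∏ r, (v r).leadingCoeff) ≠ 0 :=
      Finset.prod_ne_zero_iff.mpr fun r _ => leadingCoeff_ne_zero.mpr (hvne r)
    intro hw
    rw [hw, coeff_zero] at hcoeff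
    exact (mul_ne_zero hdetM hlc) hcoeff.symm
  · -- two equal degrees: eliminate
    rw [Function.not_injective_iff] at hinj
    obtain ⟨r2, r1, hdeq, hne12⟩ := hinj
    set c : F := (v r2).leadingCoeff / (v r1).leadingCoeff with hc
    have hlc1 : (v r1).leadingCoeff ≠ 0 := leadingCoeff_ne_zero.mpr (hvne r1)
    have hlc2 : (v r2).leadingCoeff ≠ 0 := leadingCoeff_ne_zero.mpr (hvne r2)
    have hcne : c ≠ 0 := div_ne_zero hlc2 hlc1
    by_cases hzero : v r2 - c • v r1 = 0
    · exfalso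
      set g0 : Fin n → F := Pi.single r2 (1:F) + Pi.single r1 (-c) with hg0
      have h1 : ∑ r, g0 r • v r = 0 := by
        simp only [hg0, Pi.add_apply, add_smul, Finset.sum_add_distrib]
        rw [sum_single_smul, sum_single_smul, one_smul, neg_smul, ← sub_eq_add_neg]
        exact hzero
      have := hli _ h1 r2
      rw [hg0, Pi.add_apply, Pi.single_eq_same, Pi.single_eq_of_ne hne12] at this
      simp at this
    · set w : Fin n → F[X] := Function.update v r2 (v r2 - c • v r1) with hw
      have hdegeq : (v r2).degree = (c • v r1).degree := by
        rw [smul_eq_C_mul, degree_C_mul (by exact hcne), degree_eq_natDegree (hvne r2),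
          degree_eq_natDegree (hvne r1), hdeq]
      have hlceq : (v r2).leadingCoeff = (c • v r1).leadingCoeff := by
        rw [smul_eq_C_mul, leadingCoeff_mul, leadingCoeff_C, hc,
          div_mul_cancel₀ _ hlc1]
      have hdlt : (v r2 - c • v r1).natDegree < (v r2).natDegree := by
        have := degree_sub_lt hdegeq (hvne r2) hlceq
        have h2 := natDegree_lt_natDegree hzero this
        exact h2
      have hmeas : ∑ r, (w r).natDegree < N := by
        rw [hw, ← hN]
        have hfun : ∀ r, (Function.update v r2 (v r2 - c • v r1) r).natDegree
            = Function.update (fun r => (v r).natDegree) r2 ((v r2 - c • v r1).natDegree) r := by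
          intro r
          by_cases h : r = r2
          · subst h; simp
          · simp [Function.update_of_ne h]
        rw [Finset.sum_congr rfl fun r _ => hfun r,
          Finset.sum_update_of_mem (Finset.mem_univ r2), Finset.sdiff_singleton_eq_erase,
          ← Finset.sum_erase_add Finset.univ (fun r => (v r).natDegree) (Finset.mem_univ r2)]
        omega
      have hliw : ∀ g : Fin n → F, ∑ r, g r • w r = 0 → ∀ r, g r = 0 := by
        intro g hg
        set g' : Fin n → F := g + Pi.single r1 (-(g r2 * c)) with hg'
        have hsum : ∑ r, g r • w r = ∑ r, g' r • v r := by
          have h1 : ∀ r, g r • w r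
              = Function.update (fun r => g r • v r) r2 (g r2 • (v r2 - c • v r1)) r := by
            intro r
            by_cases h : r = r2
            · subst h; simp [hw]
            · simp [hw, Function.update_of_ne h]
          rw [Finset.sum_congr rfl fun r _ => h1 r,
            Finset.sum_update_of_mem (Finset.mem_univ r2), Finset.sdiff_singleton_eq_erase]
          simp only [hg', Pi.add_apply, add_smul, Finset.sum_add_distrib, sum_single_smul]
          rw [← Finset.sum_erase_add Finset.univ (fun r => g r • v r) (Finset.mem_univ r2),
            smul_sub, smul_smul, neg_smul]
          abel
        have hz := hli _ (hsum ▸ hg)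
        intro r
        by_cases hr1 : r = r1
        · have h2 := hz r2
          rw [hg', Pi.add_apply, Pi.single_eq_of_ne hne12, add_zero] at h2
          have h1 := hz r1
          rw [hg', Pi.add_apply, Pi.single_eq_same, h2] at h1
          rw [hr1]
          simpa using h1
        · have := hz r
          rwa [hg', Pi.add_apply, Pi.single_eq_of_ne hr1, add_zero] at this
      have hwr : wr w = wr v := by
        rw [wr, hw, wrM_update]
        have hrow : (fun t : Fin n => derivative^[(t:ℕ)] (v r2 - c • v r1))
            = wrM v r2 + ((C (-c) : F[X]) • wrM v r1) := by
          funext t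
          show derivative^[(t:ℕ)] (v r2 - c • v r1)
            = derivative^[(t:ℕ)] (v r2) + C (-c) * derivative^[(t:ℕ)] (v r1)
          rw [iterate_derivative_sub, iterate_derivative_smul, map_neg, neg_mul,
            ← smul_eq_C_mul, sub_eq_add_neg]
        rw [hrow, Matrix.det_updateRow_add, Matrix.det_updateRow_smul,
          Matrix.det_updateRow_eq_zero (Ne.symm hne12), Matrix.updateRow_eq_self]
        rw [mul_zero, add_zero, wr]
      rw [← hwr]
      exact ih _ hmeas w rfl hliw

end SDE15

open SDE15 in
theorem stmt15 {F : Type*} [Field F] [CharZero F] {s k l : ℕ}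
    (α a : Fin s → F) (e : Fin s → ℕ) (hα : ∀ i, α i ≠ 0) (ha : Function.Injective a)
    (f : F[X]) (hf : f = ∑ i, C (α i) * (X - C (a i)) ^ e i)
    (P : Fin (k + 1) → F[X]) (hP : P ≠ 0)
    (hdeg : ∀ j, (P j).natDegree ≤ (j : ℕ) + l)
    (hSDE : ∑ j, P j * derivative^[(j : ℕ)] f = 0) :
    ∀ i, k + (k + l) * (s - 1) + s.choose 2 ≤ e i →
      ∑ j, P j * derivative^[(j : ℕ)] ((X - C (a i)) ^ e i) = 0 := by
  classical
  intro i hEi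
  set h : Fin s → F[X] :=
    fun j => ∑ t : Fin (k+1), P t * derivative^[(t:ℕ)] (C (α j) * (X - C (a j)) ^ e j) with hh
  -- reduction: enough to show h i = 0
  have hpull : h i = C (α i) * ∑ t : Fin (k+1), P t * derivative^[(t:ℕ)] ((X - C (a i)) ^ e i) := by
    rw [hh, Finset.mul_sum]
    refine Finset.sum_congr rfl fun t _ => ?_
    rw [iterate_derivative_C_mul, mul_left_comm]
  suffices hzero : h i = 0 by
    rw [hzero] at hpull
    rcases mul_eq_zero.mp hpull.symm with hc | hc
    · exact absurd (C_eq_zero.mp hc) (hα i)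
    · exact hc
  by_contra hne
  -- the sum of all h j vanishes
  have hsum0 : ∑ j, h j = 0 := by
    have h1 : ∑ j, h j = ∑ t : Fin (k+1), P t * derivative^[(t:ℕ)] f := by
      rw [hf]
      simp only [hh, iterate_derivative_sum, Finset.mul_sum]
      rw [Finset.sum_comm]
    rw [h1, hSDE]
  -- divisibility of each h j
  have hdvd : ∀ j, (X - C (a j)) ^ (e j - k) ∣ h j := by
    intro j
    rw [hh]
    refine Finset.dvd_sum fun t _ => ?_
    rw [iterate_derivative_C_mul, iterate_derivative_X_sub_pow]
    refine Dvd.dvd.mul_left (Dvd.dvd.mul_left ?_ _) _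
    rw [nsmul_eq_mul]
    refine Dvd.dvd.mul_left (pow_dvd_pow _ ?_) _
    have := t.isLt
    omega
  -- degree bound for each h j
  have hdegh : ∀ j, (h j).natDegree ≤ e j + l := by
    intro j
    rw [hh]
    refine natDegree_sum_le_of_forall_le _ _ fun t _ => ?_
    have hTdeg : (C (α j) * (X - C (a j)) ^ e j).natDegree ≤ e j := by
      refine natDegree_mul_le.trans ?_
      simp [natDegree_pow]
    by_cases hc : (t:ℕ) ≤ e j
    · refine natDegree_mul_le.trans ?_
      have h1 : (derivative^[(t:ℕ)] (C (α j) * (X - C (a j)) ^ e j)).natDegree ≤ e j - (t:ℕ) :=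
        (natDegree_iterate_derivative _ _).trans (Nat.sub_le_sub_right hTdeg _)
      have h2 := hdeg t
      omega
    · rw [iterate_derivative_eq_zero (lt_of_le_of_lt hTdeg (by omega)), mul_zero, natDegree_zero]
      omega
  -- minimal representing set B
  have hP0 : ∃ nn : ℕ, ∃ B : Finset (Fin s), (B ⊆ Finset.univ.erase i ∧
      ∃ c : Fin s → F, h i = ∑ j ∈ B, c j • h j) ∧ B.card = nn := by
    refine ⟨_, Finset.univ.erase i, ⟨Finset.Subset.refl _, fun _ => (-1 : F), ?_⟩, rfl⟩
    have h0 := hsum0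
    rw [← Finset.sum_erase_add Finset.univ h (Finset.mem_univ i)] at h0
    have h2 : h i = -∑ j ∈ Finset.univ.erase i, h j := eq_neg_of_add_eq_zero_right h0
    rw [h2, ← Finset.sum_neg_distrib]
    exact Finset.sum_congr rfl fun j _ => (neg_one_smul F (h j)).symm
  obtain ⟨B, ⟨hBsub, c, hrep⟩, hBcard⟩ := Nat.find_spec hP0
  have hmin : ∀ B' : Finset (Fin s), B' ⊆ Finset.univ.erase i →
      (∃ c' : Fin s → F, h i = ∑ j ∈ B', c' j • h j) → B.card ≤ B'.card := by
    intro B' hB' hc'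
    rw [hBcard]
    exact Nat.find_min' hP0 ⟨B', ⟨hB', hc'⟩, rfl⟩
  have hiB : i ∉ B := fun hi => (Finset.mem_erase.mp (hBsub hi)).1 rfl
  have hBne : B.Nonempty := by
    rcases Finset.eq_empty_or_nonempty B with rfl | hB
    · rw [Finset.sum_empty] at hrep
      exact absurd hrep hne
    · exact hB
  have hcne : ∀ j ∈ B, c j ≠ 0 := by
    intro j hj hcj
    have hrep2 : h i = ∑ j' ∈ B.erase j, c j' • h j' := by
      rw [hrep]
      exact (Finset.sum_erase _ (by rw [hcj, zero_smul])).symm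
    have := hmin (B.erase j) ((Finset.erase_subset _ _).trans hBsub) ⟨c, hrep2⟩
    have hcard := Finset.card_erase_of_mem hj
    have hpos := Finset.card_pos.mpr hBne
    omega
  have hLI : ∀ g : Fin s → F, ∑ j ∈ B, g j • h j = 0 → ∀ j ∈ B, g j = 0 := by
    intro g hg j1 hj1
    by_contra hgne
    have e1 : ∑ j ∈ B, (c j - (c j1 / g j1) * g j) • h j
        = ∑ j ∈ B, c j • h j - (c j1 / g j1) • ∑ j ∈ B, g j • h j := by
      rw [Finset.smul_sum, ← Finset.sum_sub_distrib]
      refine Finset.sum_congr rfl fun j _ => ?_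
      rw [sub_smul, mul_smul]
    have e2 : h i = ∑ j ∈ B, (c j - (c j1 / g j1) * g j) • h j := by
      rw [e1, hg, smul_zero, sub_zero, ← hrep]
    have e3 : h i = ∑ j ∈ B.erase j1, (c j - (c j1 / g j1) * g j) • h j := by
      rw [e2]
      exact (Finset.sum_erase _ (by rw [div_mul_cancel₀ _ hgne, sub_self, zero_smul])).symm
    have := hmin (B.erase j1) ((Finset.erase_subset _ _).trans hBsub) ⟨_, e3⟩
    have hcard := Finset.card_erase_of_mem hj1
    have hpos := Finset.card_pos.mpr hBne
    omega
  -- set up the Wronskian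
  set b : ℕ := B.card with hbdef
  have hb1 : 1 ≤ b := Finset.card_pos.mpr hBne
  set σ : Fin b ≃o {x // x ∈ B} := B.orderIsoOfFin hbdef.symm with hσdef
  set v : Fin b → F[X] := fun t => h ((σ t) : Fin s) with hv
  have hgB : ∀ (g' : Fin s → F), ∑ t, g' ((σ t) : Fin s) • v t = ∑ j ∈ B, g' j • h j := by
    intro g'
    rw [← Finset.sum_coe_sort B (fun j => g' j • h j)]
    exact Equiv.sum_comp σ.toEquiv (fun x : {x // x ∈ B} => g' (x : Fin s) • h (x : Fin s))
  have hvLI : ∀ g : Fin b → F, ∑ t, g t • v t = 0 → ∀ t, g t = 0 := by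
    intro g hg t
    set g' : Fin s → F := fun j => if hj : j ∈ B then g (σ.symm ⟨j, hj⟩) else 0 with hg'
    have hgg : ∀ t : Fin b, g' ((σ t) : Fin s) = g t := by
      intro t'
      rw [hg']
      dsimp only
      rw [dif_pos (σ t').2]
      congr 1
      rw [Subtype.coe_eta]
      exact σ.symm_apply_apply t'
    have hsg : ∑ j ∈ B, g' j • h j = 0 := by
      rw [← hgB g']
      rw [Finset.sum_congr rfl fun t' _ => by rw [hgg t']]
      exact hg
    have := hLI g' hsg ((σ t) : Fin s) (σ t).2
    rwa [hgg t] at this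
  have hW : wr v ≠ 0 := wr_ne_zero_aux _ v rfl hvLI
  -- divisibility of the Wronskian
  have hdvdW : ∀ t : Fin b,
      (X - C (a ((σ t) : Fin s))) ^ (e ((σ t) : Fin s) - k - (b - 1)) ∣ wr v :=
    fun t => pow_dvd_wr v _ _ t (hdvd _)
  set p0 : Fin b := ⟨0, hb1⟩ with hp0
  have hrow : (fun t : Fin b => derivative^[(t:ℕ)] (h i))
      = ∑ r : Fin b, (C (c ((σ r) : Fin s)) : F[X]) • wrM v r := by
    funext t
    rw [hrep, iterate_derivative_sum, Finset.sum_apply]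
    rw [Finset.sum_congr rfl fun j (hj : j ∈ B) =>
      (iterate_derivative_smul (c j) (h j) (t:ℕ) : _)]
    rw [← Finset.sum_coe_sort B (fun j => c j • derivative^[(t:ℕ)] (h j)),
      ← Equiv.sum_comp σ.toEquiv
        (fun x : {x // x ∈ B} => c (x : Fin s) • derivative^[(t:ℕ)] (h (x : Fin s)))]
    refine Finset.sum_congr rfl fun r _ => ?_
    show c ((σ r) : Fin s) • derivative^[(t:ℕ)] (h ((σ r) : Fin s))
        = C (c ((σ r) : Fin s)) • wrM v r t
    rw [hv, smul_eq_C_mul, smul_eq_mul]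
    rfl
  have hWi : wr (Function.update v p0 (h i)) = C (c ((σ p0) : Fin s)) * wr v := by
    rw [wr, wrM_update, hrow,
      Matrix.det_updateRow_sum (wrM v) p0 (fun r => (C (c ((σ r) : Fin s)) : F[X])),
      smul_eq_mul, wr]
  have hdvdWi : (X - C (a i)) ^ (e i - k - (b - 1)) ∣ wr v := by
    have h1 := pow_dvd_wr (Function.update v p0 (h i)) (a i) (e i - k) p0
      (by rw [Function.update_self]; exact hdvd i)
    rw [hWi] at h1
    have hcp0 : c ((σ p0) : Fin s) ≠ 0 := hcne _ (σ p0).2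
    have h2 := Dvd.dvd.mul_left h1 (C (c ((σ p0) : Fin s))⁻¹)
    rwa [← mul_assoc, ← C_mul, inv_mul_cancel₀ hcp0, C_1, one_mul] at h2
  -- product divisibility
  have hprod : (∏ j ∈ insert i B, (X - C (a j)) ^ (e j - k - (b - 1))) ∣ wr v := by
    refine Finset.prod_dvd_of_coprime ?_ ?_
    · intro x _ y _ hxy
      exact (Polynomial.pairwise_coprime_X_sub_C ha hxy).pow
    · intro j hj
      rcases Finset.mem_insert.mp hj with rfl | hjB
      · exact hdvdWi
      · have ht := hdvdW (σ.symm ⟨j, hjB⟩)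
        have hco : ((σ (σ.symm ⟨j, hjB⟩)) : Fin s) = j := by
          rw [σ.apply_symm_apply]
        rwa [hco] at ht
  -- degrees
  have hdegW : (wr v).natDegree + b.choose 2 ≤ ∑ t : Fin b, (e ((σ t) : Fin s) + l) :=
    natDegree_wr_le v _ (fun t => hdegh _) hW
  have hQdeg : (∏ j ∈ insert i B, (X - C (a j)) ^ (e j - k - (b - 1))).natDegree
      = ∑ j ∈ insert i B, (e j - k - (b - 1)) := by
    rw [natDegree_prod _ _ fun j _ => pow_ne_zero _ (X_sub_C_ne_zero _)]
    exact Finset.sum_congr rfl fun j _ => by rw [natDegree_pow, natDegree_X_sub_C, mul_one]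
  have hQle : ∑ j ∈ insert i B, (e j - k - (b - 1)) ≤ (wr v).natDegree := by
    rw [← hQdeg]
    exact natDegree_le_of_dvd hprod hW
  -- arithmetic conclusion
  have hsumB : ∑ j ∈ insert i B, (e j - k - (b - 1))
      = (e i - k - (b - 1)) + ∑ j ∈ B, (e j - k - (b - 1)) := Finset.sum_insert hiB
  have hEsum : ∑ t : Fin b, (e ((σ t) : Fin s) + l) = (∑ j ∈ B, e j) + b * l := by
    rw [Finset.sum_add_distrib]
    congr 1
    · rw [← Finset.sum_coe_sort B e]
      exact Equiv.sum_comp σ.toEquiv (fun x : {x // x ∈ B} => e (x : Fin s))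
    · simp [Finset.sum_const, Finset.card_univ, mul_comm]
  have hlow : ∑ j ∈ B, e j ≤ (∑ j ∈ B, (e j - k - (b - 1))) + (b * k + b * (b - 1)) := by
    calc ∑ j ∈ B, e j ≤ ∑ j ∈ B, ((e j - k - (b - 1)) + (k + (b - 1))) :=
          Finset.sum_le_sum fun j _ => by omega
    _ = (∑ j ∈ B, (e j - k - (b - 1))) + (b * k + b * (b - 1)) := by
          rw [Finset.sum_add_distrib, Finset.sum_const, smul_eq_mul, ← hbdef, Nat.mul_add]
  have hble : b ≤ s - 1 := by
    have h1 := Finset.card_le_card hBsub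
    rwa [Finset.card_erase_of_mem (Finset.mem_univ i), Finset.card_univ,
      Fintype.card_fin, ← hbdef] at h1
  have hbb : b * (b - 1) = 2 * b.choose 2 := by
    rw [Nat.choose_two_right, Nat.mul_div_cancel' ]
    · rcases Nat.even_or_odd b with hb | hb
      · exact Dvd.dvd.mul_right hb.two_dvd _
      · refine Dvd.dvd.mul_left ?_ _
        rcases hb with ⟨m, hm⟩
        exact ⟨m, by omega⟩
  have hchoose : b.choose 2 + b ≤ s.choose 2 := by
    have hid : (b+1).choose 2 = b.choose 2 + b := by
      have h0 := Nat.choose_succ_succ' b 1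
      rw [Nat.choose_one_right] at h0
      exact h0.trans (Nat.add_comm _ _)
    have h1 : (b+1).choose 2 ≤ s.choose 2 := Nat.choose_le_choose 2 (by omega)
    rw [hid] at h1
    omega
  have hkl : (k + l) * b = b * k + b * l := by ring
  have hq : (k + l) * b ≤ (k + l) * (s - 1) := Nat.mul_le_mul_left _ hble
  rw [hsumB] at hQle
  rw [hEsum] at hdegW
  have main : (e i - k - (b - 1)) + b.choose 2 ≤ (b * k + b * l) + b * (b - 1) := by
    omega
  have hstep : e i - k - (b - 1) ≤ (k + l) * (s - 1) + b.choose 2 := by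
    rw [hkl] at hq
    omega
  omega
end

section
/- Let f = ∑_{i=1}^s α_i (x − a_i)^d ∈ F[x] with distinct a_i ∈ F and d ≥ s. Then f satisfies an SDE of order s and shift 0 which is also satisfied by each (x − a_i)^d; moreover its leading coefficient polynomial R_s equals (∏_{i=1}^s d·(d−1)···(d−i+1)) · ∏_{i=1}^s (x − a_i) · ∏_{i<j} (a_i − a_j), up to the stated factorization, and deg(R_i) = i for each 0 ≤ i ≤ s. -/
open Polynomial

/-- Vieta-style expansion of `∏ (t - x k)` via elementary symmetric sums. -/
lemma vieta_aux18 {R : Type*} [CommRing R] {s : ℕ} (x : Fin s → R) (t : R) :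
    ∑ i ∈ Finset.range (s + 1),
      (-1 : R) ^ i * (∑ A ∈ Finset.powersetCard i (Finset.univ : Finset (Fin s)),
        ∏ k ∈ A, x k) * t ^ (s - i) = ∏ k, (t - x k) := by
  have h1 : ∀ k ∈ (Finset.univ : Finset (Fin s)), t - x k = (fun k => -x k) k + (fun _ => t) k :=
    fun k _ => by ring
  rw [Finset.prod_congr rfl h1, Finset.prod_add, Finset.powerset_card_disjiUnion]
  erw [Finset.sum_disjiUnion]
  simp only [Finset.card_univ, Fintype.card_fin]
  refine (Finset.sum_congr rfl fun i hi => ?_)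
  rw [Finset.mul_sum, Finset.sum_mul]
  refine Finset.sum_congr rfl fun A hA => ?_
  obtain ⟨hsub, hcard⟩ := Finset.mem_powersetCard.mp hA
  have hneg : ∏ k ∈ A, (-x k) = (-1 : R) ^ i * ∏ k ∈ A, x k := by
    rw [Finset.prod_congr rfl fun k _ => (neg_one_mul (x k)).symm, Finset.prod_mul_distrib,
      Finset.prod_const, hcard]
  rw [hneg, Finset.prod_const, Finset.card_sdiff_of_subset hsub, Finset.card_univ, Fintype.card_fin, hcard]

lemma esymm_natDegree18 {F : Type*} [Field F] [CharZero F] {s : ℕ} (a : Fin s → F)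
    {i : ℕ} (hi : i ≤ s) :
    (∑ A ∈ Finset.powersetCard i (Finset.univ : Finset (Fin s)),
      ∏ k ∈ A, (X - C (a k))).natDegree = i := by
  have hdeg : ∀ A ∈ Finset.powersetCard i (Finset.univ : Finset (Fin s)),
      (∏ k ∈ A, (X - C (a k))).natDegree = i := by
    intro A hA
    obtain ⟨-, hcard⟩ := Finset.mem_powersetCard.mp hA
    rw [natDegree_prod _ _ (fun k _ => X_sub_C_ne_zero (a k))]
    simp [hcard]
  have hmono : ∀ A ∈ Finset.powersetCard i (Finset.univ : Finset (Fin s)),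
      (∏ k ∈ A, (X - C (a k))).coeff i = 1 := by
    intro A hA
    have hm : (∏ k ∈ A, (X - C (a k))).Monic :=
      monic_prod_of_monic _ _ fun k _ => monic_X_sub_C (a k)
    have := hm.coeff_natDegree
    rwa [hdeg A hA] at this
  apply le_antisymm
  · refine (Polynomial.natDegree_sum_le _ _).trans ?_
    simp only [Finset.fold_max_le]
    exact ⟨Nat.zero_le _, fun A hA => le_of_eq (hdeg A hA)⟩
  · apply Polynomial.le_natDegree_of_ne_zero
    rw [Polynomial.finset_sum_coeff, Finset.sum_congr rfl hmono, Finset.sum_const,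
      Finset.card_powersetCard, Finset.card_univ, Fintype.card_fin, nsmul_eq_mul, mul_one]
    exact_mod_cast Nat.cast_ne_zero.mpr (Nat.choose_pos hi).ne'

theorem stmt18 {F : Type*} [Field F] [CharZero F] {s d : ℕ} (hds : s ≤ d)
    (α : Fin s → F) (a : Fin s → F) (ha : Function.Injective a)
    (f : F[X]) (hf : f = ∑ i, C (α i) * (X - C (a i)) ^ d) :
    ∃ R : Fin (s + 1) → F[X],
      R ≠ 0 ∧
      (∀ i : Fin (s + 1), (R i).natDegree = (i : ℕ)) ∧
      (∑ i, R i * derivative^[(i : ℕ)] f = 0) ∧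
      (∀ j : Fin s, ∑ i, R i * derivative^[(i : ℕ)] ((X - C (a j)) ^ d) = 0) ∧
      R (Fin.last s) =
        C ((∏ i ∈ Finset.range s, (d.descFactorial (i + 1) : F)) *
            ∏ p ∈ Finset.univ.filter (fun p : Fin s × Fin s => p.1 < p.2),
              (a p.1 - a p.2)) *
          ∏ j, (X - C (a j)) := by
  classical
  set c : ℕ → F := fun i => (d.descFactorial i : F) with hc
  have hcne : ∀ i ≤ d, c i ≠ 0 := by
    intro i hi
    simp only [hc, Nat.cast_ne_zero]
    intro h
    rw [Nat.descFactorial_eq_zero_iff_lt] at h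
    omega
  set V : F := ∏ p ∈ Finset.univ.filter (fun p : Fin s × Fin s => p.1 < p.2),
      (a p.1 - a p.2) with hV
  have hVne : V ≠ 0 := by
    rw [hV, Finset.prod_ne_zero_iff]
    intro p hp
    have hlt : p.1 < p.2 := (Finset.mem_filter.mp hp).2
    exact sub_ne_zero.mpr fun h => absurd (ha h) (ne_of_lt hlt)
  set K : F := (∏ i ∈ Finset.range s, c (i + 1)) * V with hK
  have hKne : K ≠ 0 := by
    refine mul_ne_zero ?_ hVne
    rw [Finset.prod_ne_zero_iff]
    intro i hi
    exact hcne _ (by have := Finset.mem_range.mp hi; omega)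
  set lam : F := (-1 : F) ^ s * c s * K with hlam
  have hlamne : lam ≠ 0 :=
    mul_ne_zero (mul_ne_zero (pow_ne_zero _ (neg_ne_zero.mpr one_ne_zero)) (hcne s hds)) hKne
  set E : ℕ → F[X] := fun i => ∑ A ∈ Finset.powersetCard i (Finset.univ : Finset (Fin s)),
      ∏ k ∈ A, (X - C (a k)) with hE
  have hEs : E s = ∏ j, (X - C (a j)) := by
    have hps : Finset.powersetCard s (Finset.univ : Finset (Fin s)) = {Finset.univ} := by
      ext A
      simp only [Finset.mem_powersetCard, Finset.mem_singleton]
      constructor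
      · rintro ⟨hsub, hcard⟩
        exact Finset.eq_of_subset_of_card_le hsub (by simp [hcard])
      · rintro rfl
        exact ⟨subset_rfl, by simp⟩
    rw [hE]
    simp only
    rw [hps, Finset.sum_singleton]
  set R : Fin (s + 1) → F[X] :=
    fun i => C lam * ((-1 : F[X]) ^ (i : ℕ) * C ((c (i : ℕ))⁻¹) * E (i : ℕ)) with hR
  have hRalt : ∀ i : Fin (s + 1), R i = C (lam * (-1 : F) ^ (i : ℕ) * (c (i : ℕ))⁻¹) * E (i : ℕ) := by
    intro i
    rw [hR]
    simp only [map_mul, map_pow, map_neg, map_one]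
    ring
  have hconst_ne : ∀ i : Fin (s + 1), lam * (-1 : F) ^ (i : ℕ) * (c (i : ℕ))⁻¹ ≠ 0 := by
    intro i
    exact mul_ne_zero (mul_ne_zero hlamne (pow_ne_zero _ (neg_ne_zero.mpr one_ne_zero)))
      (inv_ne_zero (hcne _ (le_trans i.is_le hds)))
  -- the key claim: the SDE annihilates each basis element
  have key : ∀ j : Fin s, ∑ i : Fin (s + 1), R i * derivative^[(i : ℕ)] ((X - C (a j)) ^ d) = 0 := by
    intro j
    have hstep : ∀ i : Fin (s + 1),
        R i * derivative^[(i : ℕ)] ((X - C (a j)) ^ d) =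
          C lam * (X - C (a j)) ^ (d - s) *
            ((-1 : F[X]) ^ (i : ℕ) * E (i : ℕ) * (X - C (a j)) ^ (s - (i : ℕ))) := by
      intro i
      have hi : (i : ℕ) ≤ s := i.is_le
      rw [iterate_derivative_X_sub_pow, nsmul_eq_mul]
      have hcast : ((d.descFactorial (i : ℕ) : ℕ) : F[X]) = C (c (i : ℕ)) := by
        simp [hc]
      rw [hcast]
      have hpow : (X - C (a j)) ^ (d - (i : ℕ)) =
          (X - C (a j)) ^ (d - s) * (X - C (a j)) ^ (s - (i : ℕ)) := by
        rw [← pow_add]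
        congr 1
        omega
      rw [hpow, hR]
      have hcc : C ((c (i : ℕ))⁻¹) * C (c (i : ℕ)) = 1 := by
        rw [← map_mul, inv_mul_cancel₀ (hcne _ (le_trans hi hds)), map_one]
      calc C lam * ((-1 : F[X]) ^ (i : ℕ) * C ((c (i : ℕ))⁻¹) * E (i : ℕ)) *
            (C (c (i : ℕ)) * ((X - C (a j)) ^ (d - s) * (X - C (a j)) ^ (s - (i : ℕ))))
          = C lam * (X - C (a j)) ^ (d - s) *
              ((-1 : F[X]) ^ (i : ℕ) * E (i : ℕ) * (X - C (a j)) ^ (s - (i : ℕ))) *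
              (C ((c (i : ℕ))⁻¹) * C (c (i : ℕ))) := by ring
        _ = _ := by rw [hcc, mul_one]
    rw [Finset.sum_congr rfl fun i _ => hstep i, ← Finset.mul_sum]
    have hsum : ∑ i : Fin (s + 1),
        (-1 : F[X]) ^ (i : ℕ) * E (i : ℕ) * (X - C (a j)) ^ (s - (i : ℕ)) =
        ∏ k, ((X - C (a j)) - (X - C (a k))) := by
      rw [Fin.sum_univ_eq_sum_range
        (fun i => (-1 : F[X]) ^ i * E i * (X - C (a j)) ^ (s - i))]
      exact vieta_aux18 (fun k => X - C (a k)) (X - C (a j))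
    rw [hsum, Finset.prod_eq_zero (Finset.mem_univ j) (by ring), mul_zero]
  refine ⟨R, ?_, ?_, ?_, key, ?_⟩
  · -- R ≠ 0
    intro h0
    have h1 : R 0 = 0 := congrFun h0 0
    rw [hRalt 0] at h1
    have hE0 : E ((0 : Fin (s + 1)) : ℕ) = 1 := by
      simp [hE, Finset.powersetCard_zero]
    rw [hE0, mul_one, C_eq_zero] at h1
    exact hconst_ne 0 h1
  · -- degrees
    intro i
    rw [hRalt i, natDegree_C_mul (hconst_ne i)]
    exact esymm_natDegree18 a i.is_le
  · -- SDE for f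
    rw [hf]
    calc ∑ i : Fin (s + 1), R i * derivative^[(i : ℕ)] (∑ j, C (α j) * (X - C (a j)) ^ d)
        = ∑ i : Fin (s + 1), ∑ j, C (α j) * (R i * derivative^[(i : ℕ)] ((X - C (a j)) ^ d)) := by
          refine Finset.sum_congr rfl fun i _ => ?_
          rw [iterate_derivative_sum, Finset.mul_sum]
          exact Finset.sum_congr rfl fun j _ => by rw [iterate_derivative_C_mul]; ring
      _ = ∑ j, C (α j) * ∑ i : Fin (s + 1), R i * derivative^[(i : ℕ)] ((X - C (a j)) ^ d) := by
          rw [Finset.sum_comm]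
          exact Finset.sum_congr rfl fun j _ => by rw [Finset.mul_sum]
      _ = 0 := by
          simp only [key, mul_zero, Finset.sum_const_zero]
  · -- leading coefficient
    have hlast : ((Fin.last s : Fin (s + 1)) : ℕ) = s := rfl
    have h1 : ((-1 : F) ^ s) * ((-1 : F) ^ s) = 1 := by
      rw [← pow_add]
      exact Even.neg_one_pow (Even.add_self s)
    have hconst : lam * (-1 : F) ^ s * (c s)⁻¹ = K := by
      have h2 : c s * (c s)⁻¹ = 1 := mul_inv_cancel₀ (hcne s hds)
      calc lam * (-1 : F) ^ s * (c s)⁻¹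
          = ((-1 : F) ^ s * (-1 : F) ^ s) * (c s * (c s)⁻¹) * K := by rw [hlam]; ring
        _ = K := by rw [h1, h2]; ring
    rw [hRalt (Fin.last s), hlast, hEs, hconst]
end
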